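/- arXiv:0705.4590 — 2 statements merged into one kernel-verified Lean document; each statement's English description precedes it below -/
import Mathlib

section
/- Let M be an irreducible component of the conchoid C(C,A,d) of an irreducible curve C (not a circle centered at A) with C₀ ≠ ∅. Then the open subset M₀ = {P ∈ M : ‖P-A‖² ≠ 0} is nonempty; in particular no component of a conchoid is an isotropic line through the focus. -/
open MvPolynomial Set

noncomputable section

/-- Zariski closure of a subset of affine n-space over K. -/
def zarClosure (K : Type*) [Field K] (n : ℕ) (S : Set (Fin n → K)) : Set (Fin n → K) :=
  {x | ∀ p : MvPolynomial (Fin n) K, (∀ s ∈ S, eval s p = 0) → eval x p = 0}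

/-- The Zariski topology on affine n-space over K. -/
instance zariskiTop (K : Type*) [Field K] (n : ℕ) : TopologicalSpace (Fin n → K) :=
  TopologicalSpace.generateFrom
    {U | ∃ p : MvPolynomial (Fin n) K, U = {x | eval x p ≠ 0}}

/-- The affine plane curve defined by a bivariate polynomial. -/
def curveOf {K : Type*} [Field K] (f : MvPolynomial (Fin 2) K) : Set (Fin 2 → K) :=
  {y | eval y f = 0}

/-- Squared distance (w.r.t. the bilinear form x₁y₁+x₂y₂) between P and A. -/
def nSq {K : Type*} [Field K] (A P : Fin 2 → K) : K :=
  (P 0 - A 0) ^ 2 + (P 1 - A 1) ^ 2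

/-- The non-isotropic locus C₀ of a set C relative to the focus A. -/
def nonIso {K : Type*} [Field K] (C : Set (Fin 2 → K)) (A : Fin 2 → K) : Set (Fin 2 → K) :=
  {P ∈ C | nSq A P ≠ 0}

/-- The incidence variety B(C,A,d) ⊆ K² × K² × K. -/
def Inc {K : Type*} [Field K] (C : Set (Fin 2 → K)) (A : Fin 2 → K) (d : K) :
    Set ((Fin 2 → K) × (Fin 2 → K) × K) :=
  {q | q.2.1 ∈ C ∧
    (q.1 0 - q.2.1 0) ^ 2 + (q.1 1 - q.2.1 1) ^ 2 = d ^ 2 ∧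
    (q.2.1 1 - A 1) * (q.1 0 - q.2.1 0) - (q.2.1 0 - A 0) * (q.1 1 - q.2.1 1) = 0 ∧
    q.2.2 * nSq A q.2.1 = 1}

/-- The conchoid of C from focus A at distance d: the Zariski closure of π₁(B(C,A,d)). -/
def conchoid {K : Type*} [Field K] (C : Set (Fin 2 → K)) (A : Fin 2 → K) (d : K) :
    Set (Fin 2 → K) :=
  zarClosure K 2 ((fun q => q.1) '' Inc C A d)

/-- M is an irreducible component of S (w.r.t. the Zariski topology). -/
def IsCompOf {K : Type*} [Field K] {n : ℕ} (M S : Set (Fin n → K)) : Prop :=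
  IsIrreducible M ∧ IsClosed M ∧ M ⊆ S ∧
    ∀ M' : Set (Fin n → K), IsIrreducible M' → M' ⊆ S → M ⊆ M' → M' = M

/-- The circle centered at A of radius r. -/
def circleAt {K : Type*} [Field K] (A : Fin 2 → K) (r : K) : Set (Fin 2 → K) :=
  {y | nSq A y = r ^ 2}

/-- C is a line through the point A. -/
def IsLineThrough {K : Type*} [Field K] (C : Set (Fin 2 → K)) (A : Fin 2 → K) : Prop :=
  ∃ l m : K, ¬(l = 0 ∧ m = 0) ∧ C = {y | l * (y 0 - A 0) + m * (y 1 - A 1) = 0}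

/-- The set of base points of C generating a point Q of the conchoid. -/
def gens {K : Type*} [Field K] (C : Set (Fin 2 → K)) (A : Fin 2 → K) (d : K)
    (Q : Fin 2 → K) : Set (Fin 2 → K) :=
  (fun q => q.2.1) '' {q ∈ Inc C A d | q.1 = Q}

/-- A component M of the conchoid of C is simple if generically each of its points
is generated by exactly one point of C. -/
def IsSimpleComp {K : Type*} [Field K] (C : Set (Fin 2 → K)) (A : Fin 2 → K) (d : K)
    (M : Set (Fin 2 → K)) : Prop :=
  ∃ Ω : Set (Fin 2 → K), Ω.Nonempty ∧ Ω ⊆ M ∧ M ⊆ closure Ω ∧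
    ∀ Q ∈ Ω, (gens C A d Q).ncard = 1

/-- A component M of the conchoid of C is special if generically each of its points
is generated by more than one point of C. -/
def IsSpecialComp {K : Type*} [Field K] (C : Set (Fin 2 → K)) (A : Fin 2 → K) (d : K)
    (M : Set (Fin 2 → K)) : Prop :=
  ∃ Ω : Set (Fin 2 → K), Ω.Nonempty ∧ Ω ⊆ M ∧ M ⊆ closure Ω ∧
    ∀ Q ∈ Ω, 1 < (gens C A d Q).ncard

end
noncomputable section Aux
open TopologicalSpace
variable {K : Type*} [Field K] {n : ℕ}

lemma aux_isClosed_zeroLocus (I : Ideal (MvPolynomial (Fin n) K)) :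
    IsClosed (zeroLocus K I) := by
  rw [← isOpen_compl_iff]
  have : (zeroLocus K I)ᶜ = ⋃ p ∈ I, {x : Fin n → K | eval x p ≠ 0} := by
    ext x
    simp only [Set.mem_compl_iff, mem_zeroLocus_iff, Set.mem_iUnion, Set.mem_setOf_eq]
    push_neg
    simp
  rw [this]
  exact isOpen_biUnion fun p _ => TopologicalSpace.GenerateOpen.basic _ ⟨p, rfl⟩

lemma aux_exists_basic {U : Set (Fin n → K)} (hU : IsOpen U) :
    ∀ x ∈ U, ∃ p : MvPolynomial (Fin n) K, eval x p ≠ 0 ∧ ∀ y, eval y p ≠ 0 → y ∈ U := by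
  have h : TopologicalSpace.GenerateOpen
      {V | ∃ p : MvPolynomial (Fin n) K, V = {x | eval x p ≠ 0}} U := hU
  induction h with
  | basic V hV =>
      obtain ⟨p, rfl⟩ := hV
      exact fun x hx => ⟨p, hx, fun y hy => hy⟩
  | univ => exact fun x _ => ⟨1, by simp, fun y _ => trivial⟩
  | inter U V hU' hV' ihU ihV =>
      rintro x ⟨hxU, hxV⟩
      obtain ⟨p, hp, hpU⟩ := ihU hU' x hxU
      obtain ⟨q, hq, hqV⟩ := ihV hV' x hxV
      refine ⟨p * q, by simp [hp, hq], fun y hy => ?_⟩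
      rw [map_mul] at hy
      exact ⟨hpU y (left_ne_zero_of_mul hy), hqV y (right_ne_zero_of_mul hy)⟩
  | sUnion S hS' ih =>
      rintro x ⟨V, hV, hxV⟩
      obtain ⟨p, hp, h'⟩ := ih V hV (hS' V hV) x hxV
      exact ⟨p, hp, fun y hy => ⟨V, hV, h' y hy⟩⟩

lemma aux_closed_eq_zeroLocus {F : Set (Fin n → K)} (hF : IsClosed F) :
    F = zeroLocus K (vanishingIdeal K F) := by
  refine subset_antisymm (zeroLocus_vanishingIdeal_le F) fun x hx => ?_
  by_contra hxF
  obtain ⟨p, hp, hsub⟩ := aux_exists_basic hF.isOpen_compl x hxF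
  have hpI : p ∈ vanishingIdeal K F := fun y hy => by
    by_contra hne
    exact hsub y hne hy
  exact hp (hx p hpI)

lemma aux_zarClosure_eq_zeroLocus (S : Set (Fin n → K)) :
    zarClosure K n S = zeroLocus K (vanishingIdeal K S) := rfl

lemma aux_zarClosure_eq_closure (S : Set (Fin n → K)) :
    zarClosure K n S = closure S := by
  apply subset_antisymm
  · intro x hx
    rw [aux_closed_eq_zeroLocus isClosed_closure]
    intro p hp
    exact hx p fun s hs => hp s (subset_closure hs)
  · exact closure_minimal (fun s hs p hp => hp s hs)
      (aux_zarClosure_eq_zeroLocus S ▸ aux_isClosed_zeroLocus _)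

instance aux_noeth : NoetherianSpace (Fin n → K) := by
  refine StrictMono.wellFoundedGT
    (f := fun U : Opens (Fin n → K) => vanishingIdeal K ((U : Set (Fin n → K))ᶜ)) ?_
  intro U V hUV
  have hle : vanishingIdeal K ((U : Set (Fin n → K))ᶜ) ≤ vanishingIdeal K ((V : Set (Fin n → K))ᶜ) :=
    vanishingIdeal_anti_mono (Set.compl_subset_compl.mpr hUV.le)
  refine lt_of_le_of_ne hle fun h => hUV.ne ?_
  simp only at h
  have h1 : ((U : Set (Fin n → K))ᶜ) = ((V : Set (Fin n → K))ᶜ) := by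
    rw [aux_closed_eq_zeroLocus U.isOpen.isClosed_compl,
        aux_closed_eq_zeroLocus V.isOpen.isClosed_compl, h]
  exact Opens.ext (compl_injective h1)

end Aux
noncomputable section Aux2
open TopologicalSpace
variable {K : Type*} [Field K] {n : ℕ}

lemma aux_irr_subset_finite_union {Y : Type*} [TopologicalSpace Y] {M : Set Y}
    (hM : IsIrreducible M) {F : Set (Set Y)} (hfin : F.Finite) (hcl : ∀ t ∈ F, IsClosed t)
    {g : Set Y → Set Y} (hgcl : ∀ t ∈ F, IsClosed (g t))
    (hsub : M ⊆ ⋃ t ∈ F, g t) : ∃ t ∈ F, M ⊆ g t := by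
  classical
  clear hcl
  refine Set.Finite.induction_on
    (motive := fun F _ => (∀ t ∈ F, IsClosed (g t)) → (M ⊆ ⋃ t ∈ F, g t) → ∃ t ∈ F, M ⊆ g t)
    F hfin ?_ ?_ hgcl hsub
  · intro _ hsub
    simp only [Set.mem_empty_iff_false, Set.iUnion_of_empty, Set.iUnion_empty] at hsub
    exact absurd (hsub hM.nonempty.choose_spec) (Set.notMem_empty _)
  · intro a F' haF' hF'fin ih hgcl hsub
    have hsub' : M ⊆ g a ∪ ⋃ t ∈ F', g t := by
      intro x hx
      rcases hsub hx with h
      simp only [Set.mem_iUnion, Set.mem_insert_iff] at h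
      obtain ⟨t, (rfl | htF'), hxt⟩ := h
      · exact Or.inl hxt
      · exact Or.inr (Set.mem_biUnion htF' hxt)
    have hga : IsClosed (g a) := hgcl a (Set.mem_insert _ _)
    have hgF' : IsClosed (⋃ t ∈ F', g t) :=
      hF'fin.isClosed_biUnion fun t ht => hgcl t (Set.mem_insert_of_mem _ ht)
    rcases (isPreirreducible_iff_isClosed_union_isClosed.mp hM.2) _ _ hga hgF' hsub' with h | h
    · exact ⟨a, Set.mem_insert _ _, h⟩
    · obtain ⟨t, htF', hMt⟩ := ih (fun t ht => hgcl t (Set.mem_insert_of_mem _ ht)) h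
      exact ⟨t, Set.mem_insert_of_mem _ htF', hMt⟩

/-- L1 : a maximal irreducible subset of `closure S` is the closure of its trace on `S`. -/
lemma aux_comp_subset_closure_inter {S M : Set (Fin n → K)}
    (hirr : IsIrreducible M) (hsub : M ⊆ closure S)
    (hmax : ∀ M' : Set (Fin n → K), IsIrreducible M' → M' ⊆ closure S → M ⊆ M' → M' = M) :
    M ⊆ closure (S ∩ M) := by
  obtain ⟨F, hFfin, hFcl, hFirr, hFU⟩ :=
    NoetherianSpace.exists_finite_set_isClosed_irreducible (isClosed_closure (s := S))
  have hX : closure S ⊆ ⋃ t ∈ F, closure (S ∩ t) := by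
    have hS : S = ⋃ t ∈ F, (S ∩ t) := by
      apply subset_antisymm
      · intro s hs
        obtain ⟨t, htF, hst⟩ := (hFU ▸ subset_closure hs : s ∈ ⋃₀ F)
        exact Set.mem_biUnion htF ⟨hs, hst⟩
      · intro s hs
        simp only [Set.mem_iUnion] at hs
        exact hs.choose_spec.choose_spec.1
    conv_lhs => rw [hS]
    rw [hFfin.closure_biUnion]
  obtain ⟨t, htF, hMt⟩ := aux_irr_subset_finite_union hirr hFfin hFcl
    (fun t _ => isClosed_closure) (hsub.trans hX)
  have htcl : IsClosed t := hFcl t htF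
  have hMt' : M ⊆ t := hMt.trans (closure_minimal Set.inter_subset_right htcl)
  have ht' : t = M := hmax t (hFirr t htF)
    (fun x hx => hFU ▸ Set.mem_sUnion.mpr ⟨t, htF, hx⟩) hMt'
  rw [ht'] at hMt
  exact hMt

/-- L2 : contradiction when `{A}` is a maximal irreducible subset of `closure S`
but `A` is in the closure of `S \ {A}`. -/
lemma aux_singleton_comp_false {S : Set (Fin n → K)} {A : Fin n → K}
    (hmax : ∀ M' : Set (Fin n → K), IsIrreducible M' → M' ⊆ closure S → {A} ⊆ M' → M' = {A})
    (hA : A ∈ closure (S \ {A})) : False := by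
  obtain ⟨F, hFfin, hFcl, hFirr, hFU⟩ :=
    NoetherianSpace.exists_finite_set_isClosed_irreducible (isClosed_closure (s := S))
  set X₁ : Set (Fin n → K) := ⋃ t ∈ {t ∈ F | A ∉ t}, t with hX₁
  have hX₁cl : IsClosed X₁ :=
    (hFfin.subset (Set.sep_subset _ _)).isClosed_biUnion fun t ht => hFcl t ht.1
  have hsub : S \ {A} ⊆ X₁ := by
    rintro s ⟨hsS, hsne⟩
    obtain ⟨t, htF, hst⟩ := (hFU ▸ subset_closure hsS : s ∈ ⋃₀ F)
    by_cases hAt : A ∈ t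
    · have := hmax t (hFirr t htF)
        (fun x hx => hFU ▸ Set.mem_sUnion.mpr ⟨t, htF, hx⟩)
        (Set.singleton_subset_iff.mpr hAt)
      rw [this] at hst
      exact absurd hst hsne
    · exact Set.mem_biUnion ⟨htF, hAt⟩ hst
  have hAX : A ∈ X₁ := closure_minimal hsub hX₁cl hA
  simp only [hX₁, Set.mem_iUnion, Set.mem_sep_iff] at hAX
  obtain ⟨t, ⟨htF, hAt⟩, hAt'⟩ := hAX
  exact hAt hAt'

end Aux2
noncomputable section Aux3
variable {K : Type*} [Field K]

/-- The polynomial `‖y - A‖²`. -/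
def gp (A : Fin 2 → K) : MvPolynomial (Fin 2) K :=
  (X 0 - C (A 0)) ^ 2 + (X 1 - C (A 1)) ^ 2

lemma eval_gp (A P : Fin 2 → K) : eval P (gp A) = nSq A P := by
  simp [gp, nSq]

lemma nSq_eq_zero_of_self (A : Fin 2 → K) : nSq A A = 0 := by simp [nSq]

/-- ALG2 : constructing points of the conchoid image. -/
lemma aux_mem_S {f : MvPolynomial (Fin 2) K} {A : Fin 2 → K} {d : K} {P : Fin 2 → K}
    (hP : eval P f = 0) (hg : nSq A P ≠ 0) {τ : K} (hτ : τ ^ 2 * nSq A P = d ^ 2) :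
    (fun j => P j + τ * (P j - A j)) ∈ (fun q => q.1) '' Inc (curveOf f) A d := by
  refine ⟨⟨fun j => P j + τ * (P j - A j), P, (nSq A P)⁻¹⟩, ⟨hP, ?_, ?_, ?_⟩, rfl⟩
  · show (P 0 + τ * (P 0 - A 0) - P 0) ^ 2 + (P 1 + τ * (P 1 - A 1) - P 1) ^ 2 = d ^ 2
    rw [← hτ]
    simp only [nSq]
    ring
  · show (P 1 - A 1) * (P 0 + τ * (P 0 - A 0) - P 0) -
      (P 0 - A 0) * (P 1 + τ * (P 1 - A 1) - P 1) = 0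
    ring
  · exact inv_mul_cancel₀ hg

/-- ALG1 : a conchoid image point on an isotropic line through `A` must be `A`. -/
lemma aux_S_isotropic {f : MvPolynomial (Fin 2) K} {A : Fin 2 → K} {d : K} {e : K}
    (he : e ^ 2 = -1) {Q : Fin 2 → K}
    (hQ : Q ∈ (fun q => q.1) '' Inc (curveOf f) A d)
    (hline : (Q 0 - A 0) + e * (Q 1 - A 1) = 0) : Q = A := by
  obtain ⟨⟨Q', P, w⟩, ⟨hPC, hdist, hcross, hw⟩, rfl⟩ := hQ
  simp only at hline hdist hcross hw ⊢
  have hg : nSq A P ≠ 0 := by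
    intro h0
    rw [h0, mul_zero] at hw
    exact one_ne_zero hw.symm
  set v0 := P 0 - A 0 with hv0
  set v1 := P 1 - A 1 with hv1
  have hfac : ∀ x y : K, x ^ 2 + y ^ 2 = (x + e * y) * (x - e * y) := by
    intro x y
    linear_combination y ^ 2 * he
  have key : ∀ t : K, Q' 0 - P 0 = t * v0 → Q' 1 - P 1 = t * v1 → Q' = A := by
    intro t h0 h1
    have hQ0 : Q' 0 - A 0 = (1 + t) * v0 := by rw [hv0]; linear_combination h0
    have hQ1 : Q' 1 - A 1 = (1 + t) * v1 := by rw [hv1]; linear_combination h1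
    have hl : (1 + t) * (v0 + e * v1) = 0 := by
      rw [← hline, hQ0, hQ1]; ring
    rcases mul_eq_zero.mp hl with ht | hv
    · funext j
      fin_cases j
      · have := hQ0; rw [ht, zero_mul] at this; exact sub_eq_zero.mp this
      · have := hQ1; rw [ht, zero_mul] at this; exact sub_eq_zero.mp this
    · exfalso
      apply hg
      show v0 ^ 2 + v1 ^ 2 = 0
      rw [hfac v0 v1, hv, zero_mul]
  by_cases h0 : v0 ≠ 0
  · refine key ((Q' 0 - P 0) / v0) (div_mul_cancel₀ _ h0).symm ?_
    rw [div_mul_eq_mul_div, eq_div_iff h0]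
    linear_combination -hcross
  · push_neg at h0
    have h1 : v1 ≠ 0 := by
      intro h1
      apply hg
      show v0 ^ 2 + v1 ^ 2 = 0
      rw [h0, h1]; ring
    refine key ((Q' 1 - P 1) / v1) ?_ (div_mul_cancel₀ _ h1).symm
    rw [h0, mul_zero]
    have hz : v1 * (Q' 0 - P 0) = 0 := by
      linear_combination hcross + (Q' 1 - P 1) * h0
    exact (mul_eq_zero.mp hz).resolve_left h1
end Aux3
noncomputable section Aux4
variable {K : Type*} [Field K]

lemma aux_dvd_of_vanish [IsAlgClosed K] {f p : MvPolynomial (Fin 2) K} (hf : Irreducible f)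
    (h : ∀ P : Fin 2 → K, eval P f = 0 → eval P p = 0) : f ∣ p := by
  have hprime : Prime f := UniqueFactorizationMonoid.irreducible_iff_prime.mp hf
  have hp : p ∈ vanishingIdeal K (zeroLocus K (Ideal.span {f})) := by
    intro x hx
    exact h x (hx f (Ideal.subset_span rfl))
  rw [vanishingIdeal_zeroLocus_eq_radical,
    Ideal.IsPrime.radical ((Ideal.span_singleton_prime hf.ne_zero).mpr hprime)] at hp
  exact Ideal.mem_span_singleton.mp hp

lemma aux_linear_irred {R : Type*} [CommRing R] [IsDomain R] {a b : R}
    (ha : a ≠ 0) (hb : IsUnit b) :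
    Irreducible (Polynomial.C a * Polynomial.X + Polynomial.C b) := by
  set p := Polynomial.C a * Polynomial.X + Polynomial.C b with hp
  have hdeg : p.natDegree = 1 := by
    rw [hp, Polynomial.natDegree_linear ha]
  constructor
  · intro hu
    have := Polynomial.natDegree_eq_zero_of_isUnit hu
    omega
  · intro x y hxy
    have hp0 : p ≠ 0 := fun h => by simp [h] at hdeg
    have hx0 : x ≠ 0 := fun h => hp0 (by rw [hxy, h, zero_mul])
    have hy0 : y ≠ 0 := fun h => hp0 (by rw [hxy, h, mul_zero])
    have hsum : x.natDegree + y.natDegree = 1 := by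
      rw [← Polynomial.natDegree_mul hx0 hy0, ← hxy, hdeg]
    have hco : p.coeff 0 = b := by simp [hp]
    rcases Nat.eq_zero_or_pos x.natDegree with h1 | h1
    · left
      obtain ⟨t, rfl⟩ := Polynomial.natDegree_eq_zero.mp h1
      have : t * y.coeff 0 = b := by
        rw [← hco, hxy, Polynomial.coeff_C_mul]
      exact (isUnit_of_dvd_unit ⟨y.coeff 0, this.symm⟩ hb).map Polynomial.C
    · right
      have h2 : y.natDegree = 0 := by omega
      obtain ⟨t, rfl⟩ := Polynomial.natDegree_eq_zero.mp h2
      have : t * x.coeff 0 = b := by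
        rw [← hco, hxy, Polynomial.coeff_mul_C, mul_comm]
      exact (isUnit_of_dvd_unit ⟨x.coeff 0, this.symm⟩ hb).map Polynomial.C

lemma aux_m_irred (d : K) (hd : d ≠ 0) :
    Irreducible (X 0 * X 1 - C (d ^ 2) : MvPolynomial (Fin 2) K) := by
  rw [← MulEquiv.irreducible_iff (finSuccEquiv K 1)]
  have h1 : ((1 : Fin 2)) = Fin.succ 0 := rfl
  have himg : (finSuccEquiv K 1) (X 0 * X 1 - C (d ^ 2) : MvPolynomial (Fin 2) K) =
      Polynomial.C (X 0 : MvPolynomial (Fin 1) K) * Polynomial.X +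
        Polynomial.C (-(C (d ^ 2))) := by
    rw [map_sub, map_mul, h1, finSuccEquiv_X_zero, finSuccEquiv_X_succ]
    have hC : (finSuccEquiv K 1) (C (d ^ 2) : MvPolynomial (Fin 2) K) =
        Polynomial.C (C (d ^ 2)) := by
      simp [finSuccEquiv_apply]
    rw [hC, show (Polynomial.C (-(C (d ^ 2)) : MvPolynomial (Fin 1) K)) =
      -Polynomial.C (C (d ^ 2)) from map_neg _ _]
    ring
  rw [himg]
  refine aux_linear_irred (MvPolynomial.X_ne_zero 0) ?_
  exact (((isUnit_iff_ne_zero.mpr (pow_ne_zero 2 hd)).map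
    (C : K →+* MvPolynomial (Fin 1) K))).neg

end Aux4
noncomputable section Aux5
variable {K : Type*} [Field K]

/-- Irreducibility of the circle polynomial. -/
lemma aux_circle_irred [CharZero K] (A : Fin 2 → K) {d i : K} (hd : d ≠ 0)
    (hi : i ^ 2 = -1) :
    Irreducible (gp A - C (d ^ 2) : MvPolynomial (Fin 2) K) := by
  have hi0 : i ≠ 0 := fun h => by rw [h] at hi; simp at hi
  have h2 : (2 : K) ≠ 0 := two_ne_zero
  set s : Fin 2 → MvPolynomial (Fin 2) K :=
    ![C (A 0) + C (2⁻¹ : K) * (X 0 + X 1), C (A 1) + C ((2 * i)⁻¹) * (X 0 - X 1)] with hs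
  set r : Fin 2 → MvPolynomial (Fin 2) K :=
    ![(X 0 - C (A 0)) + C i * (X 1 - C (A 1)), (X 0 - C (A 0)) - C i * (X 1 - C (A 1))] with hr
  have hC2 : (C (2⁻¹ : K) : MvPolynomial (Fin 2) K) * 2 = 1 := by
    rw [show ((2 : MvPolynomial (Fin 2) K)) = C 2 from (map_ofNat C 2).symm, ← C_mul,
      inv_mul_cancel₀ h2, C_1]
  have hCi : (C ((2 * i)⁻¹ : K) : MvPolynomial (Fin 2) K) * (C i * 2) = 1 := by
    rw [show ((2 : MvPolynomial (Fin 2) K)) = C 2 from (map_ofNat C 2).symm, ← C_mul, ← C_mul]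
    rw [show (2 * i)⁻¹ * (i * 2) = 1 by field_simp]
    exact C_1
  have hid : ∀ p : MvPolynomial (Fin 2) K, aeval r (aeval s p) = p := by
    intro p
    have hcomp : (aeval r).comp (aeval s) = AlgHom.id K (MvPolynomial (Fin 2) K) := by
      apply MvPolynomial.algHom_ext
      intro j
      fin_cases j
      · simp only [Fin.zero_eta, Fin.mk_one, AlgHom.comp_apply, aeval_X, hs, hr,
          Matrix.cons_val_zero, map_add, map_mul, aeval_C, algebraMap_eq, AlgHom.id_apply,
          map_sub, Matrix.cons_val_one, Matrix.head_cons]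
        linear_combination (X 0 - C (A 0) : MvPolynomial (Fin 2) K) * hC2
      · simp only [Fin.zero_eta, Fin.mk_one, AlgHom.comp_apply, aeval_X, hs, hr,
          Matrix.cons_val_zero, map_add, map_mul, aeval_C, algebraMap_eq, AlgHom.id_apply,
          map_sub, Matrix.cons_val_one, Matrix.head_cons]
        linear_combination (X 1 - C (A 1) : MvPolynomial (Fin 2) K) * hCi
    calc aeval r (aeval s p) = ((aeval r).comp (aeval s)) p := rfl
    _ = p := by rw [hcomp]; rfl
  -- image of the circle polynomial
  have hp1 : (C (2⁻¹ : K) : MvPolynomial (Fin 2) K) ^ 2 = C ((4 : K)⁻¹) := by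
    rw [← C_pow]
    congr 1
    rw [show ((4:K) = 2^2) by norm_num, ← inv_pow]
  have hp2 : (C ((2 * i)⁻¹ : K) : MvPolynomial (Fin 2) K) ^ 2 = -C ((4 : K)⁻¹) := by
    rw [← C_pow, ← map_neg C]
    congr 1
    have h24 : ((2 * i : K)) ^ 2 = -4 := by rw [mul_pow, hi]; ring
    rw [inv_pow, h24, inv_neg]
  have h4 : (C ((4 : K)⁻¹) : MvPolynomial (Fin 2) K) * 4 = 1 := by
    rw [show ((4 : MvPolynomial (Fin 2) K)) = C 4 from (map_ofNat C 4).symm, ← C_mul,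
      inv_mul_cancel₀ (by norm_num : (4:K) ≠ 0), C_1]
  have himg : aeval s (gp A - C (d ^ 2)) = (X 0 * X 1 - C (d ^ 2) : MvPolynomial (Fin 2) K) := by
    simp only [gp, map_sub, map_add, map_pow, map_mul, aeval_X, aeval_C, algebraMap_eq, hs,
      Matrix.cons_val_zero, Matrix.cons_val_one, Matrix.head_cons]
    linear_combination ((X 0 + X 1 : MvPolynomial (Fin 2) K)^2) * hp1 +
      ((X 0 - X 1 : MvPolynomial (Fin 2) K)^2) * hp2 + (X 0 * X 1 : MvPolynomial (Fin 2) K) * h4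
  -- transfer irreducibility
  have hm := aux_m_irred d hd
  rw [← himg] at hm
  constructor
  · intro hu
    exact hm.not_isUnit (hu.map (aeval s))
  · intro x y hxy
    have : aeval s (gp A - C (d ^ 2)) = aeval s x * aeval s y := by rw [hxy, map_mul]
    rcases hm.isUnit_or_isUnit this with h | h
    · left
      have := h.map (aeval r)
      rwa [hid] at this
    · right
      have := h.map (aeval r)
      rwa [hid] at this

end Aux5
noncomputable section Aux6
variable {K : Type*} [Field K]

/-- Substitution `X j ↦ X j + t (X j - A j)` into a bivariate polynomial,
as a univariate polynomial in `t` over the bivariate polynomial ring. -/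
def hhat (A : Fin 2 → K) (h : MvPolynomial (Fin 2) K) : Polynomial (MvPolynomial (Fin 2) K) :=
  aeval (fun j => Polynomial.C (X j) + Polynomial.X * Polynomial.C (X j - C (A j))) h

lemma hhat_eval₂ (A : Fin 2 → K) (h : MvPolynomial (Fin 2) K) (P : Fin 2 → K) (τ : K) :
    Polynomial.eval₂ (MvPolynomial.eval P) τ (hhat A h)
      = eval (fun j => P j + τ * (P j - A j)) h := by
  have hcomp : (Polynomial.eval₂RingHom (MvPolynomial.eval P) τ).comp
      (aeval (fun j : Fin 2 => Polynomial.C (X j) + Polynomial.X * Polynomial.C (X j - C (A j))) :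
        MvPolynomial (Fin 2) K →ₐ[K] Polynomial (MvPolynomial (Fin 2) K)).toRingHom
      = (eval (fun j => P j + τ * (P j - A j)) : MvPolynomial (Fin 2) K →+* K) := by
    apply MvPolynomial.ringHom_ext
    · intro c
      simp [algebraMap_eq]
    · intro j
      simp
  calc Polynomial.eval₂ (MvPolynomial.eval P) τ (hhat A h)
      = ((Polynomial.eval₂RingHom (MvPolynomial.eval P) τ).comp
          (aeval (fun j : Fin 2 => Polynomial.C (X j) + Polynomial.X * Polynomial.C (X j - C (A j))) :
            MvPolynomial (Fin 2) K →ₐ[K] Polynomial (MvPolynomial (Fin 2) K)).toRingHom) h := rfl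
    _ = eval (fun j => P j + τ * (P j - A j)) h := by rw [hcomp]

/-- The even-part elimination polynomial. -/
def Epoly (A : Fin 2 → K) (d : K) (h : MvPolynomial (Fin 2) K) : MvPolynomial (Fin 2) K :=
  ∑ j ∈ Finset.range ((hhat A h).natDegree + 1),
    (hhat A h).coeff (2 * j) * (C (d ^ 2)) ^ j * (gp A) ^ ((hhat A h).natDegree - j)

lemma sum_range_two_mul {M : Type*} [AddCommMonoid M] (n : ℕ) (F : ℕ → M) :
    ∑ k ∈ Finset.range (2 * n), F k = ∑ j ∈ Finset.range n, (F (2 * j) + F (2 * j + 1)) := by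
  induction n with
  | zero => simp
  | succ m ih =>
      rw [Finset.sum_range_succ, ← ih, show 2 * (m + 1) = (2 * m + 1) + 1 by ring,
        Finset.sum_range_succ, Finset.sum_range_succ, add_assoc]

lemma Epoly_eval (A : Fin 2 → K) (d : K) (h : MvPolynomial (Fin 2) K) (P : Fin 2 → K) (τ : K)
    (hτ : τ ^ 2 * nSq A P = d ^ 2) :
    2 * eval P (Epoly A d h) =
      (nSq A P) ^ ((hhat A h).natDegree) *
        (eval (fun j => P j + τ * (P j - A j)) h
          + eval (fun j => P j + (-τ) * (P j - A j)) h) := by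
  set N := (hhat A h).natDegree with hN
  set c : ℕ → K := fun k => eval P ((hhat A h).coeff k) with hc
  have hL : eval P (Epoly A d h) = (nSq A P) ^ N * ∑ j ∈ Finset.range (N + 1), c (2 * j) * τ ^ (2 * j) := by
    rw [Epoly, map_sum, Finset.mul_sum]
    apply Finset.sum_congr rfl
    intro j hj
    have hjN : j ≤ N := Nat.lt_succ_iff.mp (Finset.mem_range.mp hj)
    simp only [map_mul, map_pow, eval_C, eval_gp]
    rw [← hτ]
    calc c (2 * j) * (τ ^ 2 * nSq A P) ^ j * (nSq A P) ^ (N - j)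
        = c (2 * j) * τ ^ (2 * j) * ((nSq A P) ^ j * (nSq A P) ^ (N - j)) := by
          rw [mul_pow, ← pow_mul]; ring
      _ = (nSq A P) ^ N * (c (2 * j) * τ ^ (2 * j)) := by
          rw [← pow_add, Nat.add_sub_cancel' hjN]; ring
  have hR : ∀ σ : K, eval (fun j => P j + σ * (P j - A j)) h =
      ∑ k ∈ Finset.range (2 * (N + 1)), c k * σ ^ k := by
    intro σ
    rw [← hhat_eval₂ A h P σ,
      Polynomial.eval₂_eq_sum_range' (MvPolynomial.eval P) (n := 2 * (N + 1)) (by omega) σ]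
  have hcomb : ∑ k ∈ Finset.range (2 * (N + 1)), (c k * τ ^ k + c k * (-τ) ^ k)
      = 2 * ∑ j ∈ Finset.range (N + 1), c (2 * j) * τ ^ (2 * j) := by
    rw [sum_range_two_mul, Finset.mul_sum]
    apply Finset.sum_congr rfl
    intro j _
    have he : (-τ) ^ (2 * j) = τ ^ (2 * j) := Even.neg_pow (even_two_mul j) τ
    have ho : (-τ) ^ (2 * j + 1) = -τ ^ (2 * j + 1) := Odd.neg_pow ⟨j, by ring⟩ τ
    rw [he, ho]; ring
  rw [hL, hR τ, hR (-τ), ← Finset.sum_add_distrib, hcomb]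
  ring

end Aux6
noncomputable section Aux7
variable {K : Type*} [Field K]

/-- The focus lies in the Zariski closure of the conchoid image minus the focus,
provided some base point is at distance `d` from the focus. -/
lemma aux_focus_mem_closure [IsAlgClosed K] [CharZero K]
    {f : MvPolynomial (Fin 2) K} (hf : Irreducible f) {A : Fin 2 → K} {d : K} (hd : d ≠ 0)
    (h0 : (nonIso (curveOf f) A).Nonempty)
    (hC : ¬ ∃ r : K, curveOf f = circleAt A r)
    {P₀ : Fin 2 → K} (hP₀C : eval P₀ f = 0) (hP₀g : nSq A P₀ = d ^ 2) :
    A ∈ closure ((fun q => q.1) '' Inc (curveOf f) A d \ {A}) := by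
  rw [← aux_zarClosure_eq_closure]
  intro h hh
  obtain ⟨i, hi⟩ := IsAlgClosed.exists_pow_nat_eq (-1 : K) (n := 2) (by norm_num)
  have hd2 : (d ^ 2 : K) ≠ 0 := pow_ne_zero 2 hd
  -- vanishing of h at generated points
  have hQvan : ∀ P : Fin 2 → K, eval P f = 0 → nSq A P ≠ 0 → nSq A P ≠ d ^ 2 →
      ∀ σ : K, σ ^ 2 * nSq A P = d ^ 2 → eval (fun j => P j + σ * (P j - A j)) h = 0 := by
    intro P hPf hg0 hgd σ hσ
    apply hh
    refine ⟨aux_mem_S hPf hg0 hσ, ?_⟩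
    intro hQA
    rw [Set.mem_singleton_iff] at hQA
    have h1 : ∀ j, (1 + σ) * (P j - A j) = 0 := by
      intro j
      have := congrFun hQA j
      linear_combination this
    have hPA : P 0 - A 0 ≠ 0 ∨ P 1 - A 1 ≠ 0 := by
      by_contra hcon
      push_neg at hcon
      apply hg0
      show (P 0 - A 0) ^ 2 + (P 1 - A 1) ^ 2 = 0
      rw [hcon.1, hcon.2]; ring
    have hσ1 : (1 : K) + σ = 0 := by
      rcases hPA with hne | hne
      · exact (mul_eq_zero.mp (h1 0)).resolve_right hne
      · exact (mul_eq_zero.mp (h1 1)).resolve_right hne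
    have hσm : σ = -1 := by linear_combination hσ1
    rw [hσm] at hσ
    exact hgd (by linear_combination hσ)
  -- E * g * (g - d²) vanishes on the curve
  have hvan : ∀ P : Fin 2 → K, eval P f = 0 →
      eval P (Epoly A d h * gp A * (gp A - C (d ^ 2))) = 0 := by
    intro P hPf
    rw [map_mul, map_mul, map_sub, eval_C, eval_gp]
    by_cases hg0 : nSq A P = 0
    · rw [hg0]; ring
    by_cases hgd : nSq A P = d ^ 2
    · rw [hgd]; ring
    obtain ⟨τ, hτ⟩ := IsAlgClosed.exists_pow_nat_eq (d ^ 2 / nSq A P) (n := 2) (by norm_num)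
    have hτ2 : τ ^ 2 * nSq A P = d ^ 2 := by
      rw [hτ]
      exact div_mul_cancel₀ _ hg0
    have hτ2' : (-τ) ^ 2 * nSq A P = d ^ 2 := by
      have hneg : (-τ) ^ 2 = τ ^ 2 := by ring
      rw [hneg]
      exact hτ2
    have hE : eval P (Epoly A d h) = 0 := by
      have hkey := Epoly_eval A d h P τ hτ2
      rw [hQvan P hPf hg0 hgd τ hτ2, hQvan P hPf hg0 hgd (-τ) hτ2'] at hkey
      have h20 : (2 : K) * eval P (Epoly A d h) = 0 := by rw [hkey]; ring
      exact (mul_eq_zero.mp h20).resolve_left two_ne_zero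
    rw [hE]; ring
  -- f divides E
  have hdvd : f ∣ Epoly A d h * gp A * (gp A - C (d ^ 2)) := aux_dvd_of_vanish hf hvan
  have hprime : Prime f := UniqueFactorizationMonoid.irreducible_iff_prime.mp hf
  have hfg : ¬ f ∣ gp A := by
    rintro ⟨k, hk⟩
    obtain ⟨P₁, hP₁⟩ := h0
    apply hP₁.2
    rw [← eval_gp, hk, map_mul, show eval P₁ f = 0 from hP₁.1, zero_mul]
  have hfc : ¬ f ∣ (gp A - C (d ^ 2)) := by
    rintro ⟨k, hk⟩
    have hcirc := aux_circle_irred A hd hi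
    rcases hcirc.isUnit_or_isUnit hk with hu | hu
    · exact hf.not_isUnit hu
    · apply hC
      refine ⟨d, ?_⟩
      obtain ⟨v, hv⟩ := hu.exists_right_inv
      ext y
      have hkne : eval y k ≠ 0 := by
        intro h0'
        have hv' := congrArg (eval y) hv
        rw [map_mul, h0', zero_mul, map_one] at hv'
        exact one_ne_zero hv'.symm
      have heq := congrArg (eval y) hk
      rw [map_sub, eval_C, eval_gp, map_mul] at heq
      constructor
      · intro hyf
        show nSq A y = d ^ 2
        rw [show eval y f = 0 from hyf, zero_mul] at heq
        linear_combination heq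
      · intro hyc
        have hyc' : nSq A y = d ^ 2 := hyc
        rw [hyc'] at heq
        have hz : eval y f * eval y k = 0 := by linear_combination -heq
        show eval y f = 0
        exact (mul_eq_zero.mp hz).resolve_right hkne
  have hfE : f ∣ Epoly A d h := by
    rcases hprime.dvd_mul.mp hdvd with h1 | h2
    · rcases hprime.dvd_mul.mp h1 with hE | hg'
      · exact hE
      · exact absurd hg' hfg
    · exact absurd h2 hfc
  obtain ⟨k, hk⟩ := hfE
  have hE0 : eval P₀ (Epoly A d h) = 0 := by rw [hk, map_mul, hP₀C, zero_mul]
  have hτ1 : (1 : K) ^ 2 * nSq A P₀ = d ^ 2 := by rw [one_pow, one_mul, hP₀g]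
  have hkey := Epoly_eval A d h P₀ 1 hτ1
  rw [hE0, mul_zero] at hkey
  have hA2 : (fun j => P₀ j + (-(1:K)) * (P₀ j - A j)) = A := by
    funext j; ring
  rw [hA2] at hkey
  have hP₀0 : nSq A P₀ ≠ 0 := by rw [hP₀g]; exact hd2
  have hA' : eval (fun j => P₀ j + (1:K) * (P₀ j - A j)) h = 0 := by
    apply hh
    refine ⟨aux_mem_S hP₀C hP₀0 hτ1, ?_⟩
    intro hQA
    rw [Set.mem_singleton_iff] at hQA
    have h1 := congrFun hQA 0
    have h2 := congrFun hQA 1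
    apply hP₀0
    show (P₀ 0 - A 0) ^ 2 + (P₀ 1 - A 1) ^ 2 = 0
    have e1 : P₀ 0 - A 0 = 0 := by linear_combination h1 / 2
    have e2 : P₀ 1 - A 1 = 0 := by linear_combination h2 / 2
    rw [e1, e2]; ring
  rw [hA', hP₀g, zero_add] at hkey
  exact ((mul_eq_zero.mp hkey.symm).resolve_left (pow_ne_zero _ hd2))

end Aux7
theorem stmt12 {K : Type*} [Field K] [IsAlgClosed K] [CharZero K]
    (f : MvPolynomial (Fin 2) K) (hf : Irreducible f)
    (A : Fin 2 → K) (d : K) (hd : d ≠ 0)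
    (h0 : (nonIso (curveOf f) A).Nonempty)
    (hC : ¬ ∃ r : K, curveOf f = circleAt A r)
    (M : Set (Fin 2 → K)) (hM : IsCompOf M (conchoid (curveOf f) A d)) :
    (nonIso M A).Nonempty ∧
    ∀ i : K, i ^ 2 = -1 →
      M ≠ {y : Fin 2 → K | (y 0 - A 0) + i * (y 1 - A 1) = 0} ∧
      M ≠ {y : Fin 2 → K | (y 0 - A 0) - i * (y 1 - A 1) = 0} := by
  obtain ⟨i₀, hi₀⟩ := IsAlgClosed.exists_pow_nat_eq (-1 : K) (n := 2) (by norm_num)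
  set S := (fun q => q.1) '' Inc (curveOf f) A d with hS
  have hconch : conchoid (curveOf f) A d = closure S := aux_zarClosure_eq_closure S
  obtain ⟨hMirr, hMcl, hMsub, hMmax⟩ := hM
  have hmax' : ∀ M' : Set (Fin 2 → K), IsIrreducible M' → M' ⊆ closure S → M ⊆ M' → M' = M :=
    fun M' h1 h2 h3 => hMmax M' h1 (by rwa [hconch]) h3
  have hlcl : ∀ e : K, IsClosed {y : Fin 2 → K | (y 0 - A 0) + e * (y 1 - A 1) = 0} := by
    intro e
    have heq : {y : Fin 2 → K | (y 0 - A 0) + e * (y 1 - A 1) = 0}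
        = zeroLocus K (Ideal.span {(X 0 - C (A 0)) + C e * (X 1 - C (A 1))}) := by
      rw [zeroLocus_span]
      ext y
      simp
    rw [heq]
    exact aux_isClosed_zeroLocus _
  have part1 : (nonIso M A).Nonempty := by
    by_contra hne
    have hall : ∀ P ∈ M, nSq A P = 0 := by
      intro P hP
      by_contra hg
      exact hne ⟨P, hP, hg⟩
    have hsplit : M ⊆ {y : Fin 2 → K | (y 0 - A 0) + i₀ * (y 1 - A 1) = 0} ∪
        {y : Fin 2 → K | (y 0 - A 0) + (-i₀) * (y 1 - A 1) = 0} := by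
      intro y hy
      have hn : (y 0 - A 0) ^ 2 + (y 1 - A 1) ^ 2 = 0 := hall y hy
      have hfac : ((y 0 - A 0) + i₀ * (y 1 - A 1)) * ((y 0 - A 0) + (-i₀) * (y 1 - A 1)) = 0 := by
        linear_combination hn - ((y 1 - A 1) ^ 2) * hi₀
      rcases mul_eq_zero.mp hfac with hcase | hcase
      · exact Or.inl hcase
      · exact Or.inr hcase
    have hMline : ∃ e : K, e ^ 2 = -1 ∧ M ⊆ {y : Fin 2 → K | (y 0 - A 0) + e * (y 1 - A 1) = 0} := by
      rcases (isPreirreducible_iff_isClosed_union_isClosed.mp hMirr.2) _ _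
        (hlcl i₀) (hlcl (-i₀)) hsplit with hcase | hcase
      · exact ⟨i₀, hi₀, hcase⟩
      · exact ⟨-i₀, by rw [show ((-i₀) ^ 2 = i₀ ^ 2) by ring, hi₀], hcase⟩
    obtain ⟨e, he, hMe⟩ := hMline
    have hSM : S ∩ M ⊆ {A} := by
      rintro Q ⟨hQS, hQM⟩
      exact aux_S_isotropic he hQS (hMe hQM)
    have hMcl2 : M ⊆ closure (S ∩ M) :=
      aux_comp_subset_closure_inter hMirr (hconch ▸ hMsub) hmax'
    have hAcl : IsClosed ({A} : Set (Fin 2 → K)) := by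
      have hA : ({A} : Set (Fin 2 → K)) =
          zeroLocus K (Ideal.span {(X 0 - C (A 0) : MvPolynomial (Fin 2) K), X 1 - C (A 1)}) := by
        rw [zeroLocus_span]
        ext y
        simp only [Set.mem_singleton_iff, Set.mem_setOf_eq, Set.mem_insert_iff]
        constructor
        · rintro rfl p hp
          rcases hp with rfl | rfl
          · simp
          · simp
        · intro hp
          have h1 := hp _ (Or.inl rfl)
          have h2 := hp _ (Or.inr rfl)
          simp only [map_sub, aeval_X, aeval_C, algebraMap_eq, RingHom.id_apply] at h1 h2
          funext j
          fin_cases j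
          · exact sub_eq_zero.mp h1
          · exact sub_eq_zero.mp h2
      rw [hA]
      exact aux_isClosed_zeroLocus _
    have hMA : M ⊆ ({A} : Set (Fin 2 → K)) := by
      refine hMcl2.trans ?_
      calc closure (S ∩ M) ⊆ closure {A} := closure_mono hSM
        _ = {A} := hAcl.closure_eq
    have hAM : A ∈ M := by
      obtain ⟨x, hx⟩ := hMirr.nonempty
      have hxA := hMA hx
      rw [Set.mem_singleton_iff] at hxA
      rwa [hxA] at hx
    have hMeq : M = ({A} : Set (Fin 2 → K)) :=
      subset_antisymm hMA (Set.singleton_subset_iff.mpr hAM)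
    have hAS : A ∈ S := by
      rcases Set.eq_empty_or_nonempty (S ∩ M) with hemp | ⟨z, hz⟩
      · exfalso
        rw [hemp, closure_empty] at hMcl2
        exact Set.notMem_empty A (hMcl2 hAM)
      · have hzA := hSM hz
        rw [Set.mem_singleton_iff] at hzA
        rw [← hzA]
        exact hz.1
    obtain ⟨⟨QA, P₀, w⟩, ⟨hP₀C, hdist, hcross, hw⟩, hq1⟩ := hAS
    simp only at hq1 hdist
    have hP₀g : nSq A P₀ = d ^ 2 := by
      show (P₀ 0 - A 0) ^ 2 + (P₀ 1 - A 1) ^ 2 = d ^ 2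
      rw [hq1] at hdist
      linear_combination hdist
    have hfocus := aux_focus_mem_closure hf hd h0 hC (show eval P₀ f = 0 from hP₀C) hP₀g
    refine aux_singleton_comp_false (S := S) (A := A) ?_ hfocus
    intro M' h1 h2 h3
    have h3' : M ⊆ M' := by rw [hMeq]; exact h3
    rw [← hMeq]
    exact hmax' M' h1 h2 h3'
  refine ⟨part1, fun i hi => ⟨?_, ?_⟩⟩
  · intro hMeq
    obtain ⟨P, hPM, hPg⟩ := part1
    apply hPg
    rw [hMeq] at hPM
    have hline : (P 0 - A 0) + i * (P 1 - A 1) = 0 := hPM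
    show (P 0 - A 0) ^ 2 + (P 1 - A 1) ^ 2 = 0
    linear_combination ((P 0 - A 0) - i * (P 1 - A 1)) * hline + ((P 1 - A 1) ^ 2) * hi
  · intro hMeq
    obtain ⟨P, hPM, hPg⟩ := part1
    apply hPg
    rw [hMeq] at hPM
    have hline : (P 0 - A 0) - i * (P 1 - A 1) = 0 := hPM
    show (P 0 - A 0) ^ 2 + (P 1 - A 1) ^ 2 = 0
    linear_combination ((P 0 - A 0) + i * (P 1 - A 1)) * hline + ((P 1 - A 1) ^ 2) * hi
end

section
/- Let C(C,A,d) be reducible (with exactly two irreducible components M and M'), where C is irreducible and not the circle centered at A of radius d. Then the restriction of π₂ to π₁⁻¹(M) is a birational map onto C; consequently, every simple component of a reducible conchoid is birationally equivalent to the base curve C. -/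
open MvPolynomial Set

section AuxConchoid

noncomputable section

variable {K : Type*} [Field K] {n : ℕ}

lemma zar_isOpen (p : MvPolynomial (Fin n) K) : IsOpen {x : Fin n → K | eval x p ≠ 0} :=
  TopologicalSpace.isOpen_generateFrom_of_mem ⟨p, rfl⟩

lemma zar_exists_of_isOpen {U : Set (Fin n → K)} (hU : IsOpen U) :
    ∀ x ∈ U, ∃ p : MvPolynomial (Fin n) K, eval x p ≠ 0 ∧ {y | eval y p ≠ 0} ⊆ U := by
  have hU' : TopologicalSpace.GenerateOpen
      {U | ∃ p : MvPolynomial (Fin n) K, U = {x | eval x p ≠ 0}} U := hU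
  clear hU
  induction hU' with
  | basic V hV =>
      obtain ⟨p, rfl⟩ := hV
      exact fun x hx => ⟨p, hx, fun y hy => hy⟩
  | univ => exact fun x _ => ⟨1, by simp, fun y _ => trivial⟩
  | inter V W hV hW ihV ihW =>
      rintro x ⟨hxV, hxW⟩
      obtain ⟨p, hp, hpV⟩ := ihV x hxV
      obtain ⟨q, hq, hqW⟩ := ihW x hxW
      refine ⟨p * q, by simp [hp, hq], fun y hy => ?_⟩
      simp only [mem_setOf_eq, map_mul, mul_ne_zero_iff] at hy
      exact ⟨hpV hy.1, hqW hy.2⟩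
  | sUnion S hS ih =>
      rintro x ⟨V, hVS, hxV⟩
      obtain ⟨p, hp, hpV⟩ := ih V hVS x hxV
      exact ⟨p, hp, fun y hy => ⟨V, hVS, hpV hy⟩⟩

lemma mem_closure_iff_zar {S : Set (Fin n → K)} {x : Fin n → K} :
    x ∈ closure S ↔
      ∀ p : MvPolynomial (Fin n) K, (∀ s ∈ S, eval s p = 0) → eval x p = 0 := by
  constructor
  · intro hx p hp
    by_contra hxp
    have hop : IsOpen {y : Fin n → K | eval y p ≠ 0} := zar_isOpen p
    obtain ⟨y, hy1, hy2⟩ := mem_closure_iff.mp hx _ hop hxp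
    exact hy1 (hp y hy2)
  · intro h
    by_contra hx
    obtain ⟨p, hp, hpU⟩ := zar_exists_of_isOpen (isOpen_compl_iff.mpr isClosed_closure) x hx
    have : ∀ s ∈ S, eval s p = 0 := by
      intro s hs
      by_contra hsp
      exact (hpU hsp) (subset_closure hs)
    exact hp (h p this)

lemma exists_poly_of_not_mem_closed {M : Set (Fin n → K)} (hM : IsClosed M)
    {z : Fin n → K} (hz : z ∉ M) :
    ∃ p : MvPolynomial (Fin n) K, (∀ m ∈ M, eval m p = 0) ∧ eval z p ≠ 0 := by
  obtain ⟨p, hp, hpU⟩ := zar_exists_of_isOpen hM.isOpen_compl z hz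
  refine ⟨p, fun m hm => ?_, hp⟩
  by_contra hmp
  exact (hpU hmp) hm


noncomputable def e1 (K : Type*) [Field K] : MvPolynomial (Fin 1) K ≃ₐ[K] Polynomial K :=
  (MvPolynomial.finSuccEquiv K 0).trans
    (Polynomial.mapAlgEquiv (MvPolynomial.isEmptyAlgEquiv K (Fin 0)))

lemma eval_fin0 (t : Fin 0 → K) (b : MvPolynomial (Fin 0) K) :
    eval t b = MvPolynomial.isEmptyAlgEquiv K (Fin 0) b := by
  have ht : t = (IsEmpty.elim (by infer_instance)) := by funext i; exact i.elim0
  have : MvPolynomial.isEmptyAlgEquiv K (Fin 0) b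
      = MvPolynomial.aeval (IsEmpty.elim (by infer_instance)) b := by
    have h := MvPolynomial.algHom_ext (f := (MvPolynomial.isEmptyAlgEquiv K (Fin 0)).toAlgHom)
      (g := MvPolynomial.aeval (IsEmpty.elim (by infer_instance) : Fin 0 → K)) (fun i => i.elim0)
    exact congrArg (fun φ => φ b) h
  rw [this, ← MvPolynomial.coe_aeval_eq_eval, ht]
  rfl

lemma eval_e1 (x : Fin 1 → K) (a : MvPolynomial (Fin 1) K) :
    eval x a = (e1 K a).eval (x 0) := by
  have h := MvPolynomial.eval_eq_eval_mv_eval' (Fin.tail x) (x 0) a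
  rw [Fin.cons_self_tail] at h
  rw [h]
  congr 1
  rw [e1]
  simp only [AlgEquiv.trans_apply, Polynomial.coe_mapAlgEquiv]
  congr 1
  have : (eval (Fin.tail x) : MvPolynomial (Fin 0) K →+* K)
      = ((MvPolynomial.isEmptyAlgEquiv K (Fin 0) : MvPolynomial (Fin 0) K ≃+* K) :
          MvPolynomial (Fin 0) K →+* K) := by
    apply MvPolynomial.ringHom_ext
    · intro r; rw [MvPolynomial.eval_C]; exact ((MvPolynomial.isEmptyAlgEquiv K (Fin 0)).commutes r).symm
    · intro i; exact i.elim0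
  rw [this]
  rfl

lemma e1_X_sub_C (c : K) :
    e1 K (X 0 - C c) = Polynomial.X - Polynomial.C c := by
  rw [e1]
  have hC : (MvPolynomial.C c : MvPolynomial (Fin 1) K) = algebraMap K _ c := rfl
  simp only [AlgEquiv.trans_apply, Polynomial.coe_mapAlgEquiv, map_sub,
    MvPolynomial.finSuccEquiv_X_zero, hC, AlgEquiv.commutes]
  simp [Polynomial.algebraMap_apply]

lemma univ_root_finite {a : MvPolynomial (Fin 1) K} (ha : a ≠ 0) :
    {x : Fin 1 → K | eval x a = 0}.Finite := by
  have h1 : e1 K a ≠ 0 := by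
    intro h; apply ha; simpa using congrArg (e1 K).symm h
  have h2 : {y : K | (e1 K a).IsRoot y}.Finite := Polynomial.finite_setOf_isRoot h1
  have : {x : Fin 1 → K | eval x a = 0} ⊆ (fun y => (fun _ : Fin 1 => y)) '' {y | (e1 K a).IsRoot y} := by
    intro x hx
    have hx' : Polynomial.eval (x 0) (e1 K a) = 0 := by
      have : eval x a = 0 := hx; rwa [eval_e1] at this
    refine ⟨x 0, hx', ?_⟩
    funext i
    have : i = 0 := Subsingleton.elim i 0
    rw [this]
  exact Finite.subset (h2.image _) this

lemma univ_factor {a : MvPolynomial (Fin 1) K} {t : Fin 1 → K} (h : eval t a = 0) :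
    (X 0 - C (t 0)) ∣ a := by
  have : (Polynomial.X - Polynomial.C (t 0)) ∣ e1 K a := by
    rw [Polynomial.dvd_iff_isRoot]
    rw [eval_e1] at h; exact h
  obtain ⟨q, hq⟩ := this
  refine ⟨(e1 K).symm q, ?_⟩
  apply (e1 K).injective
  rw [map_mul, e1_X_sub_C, AlgEquiv.apply_symm_apply, hq]

lemma univ_irred_dvd [IsAlgClosed K] {a : MvPolynomial (Fin 1) K} (ha : Irreducible a)
    {t : Fin 1 → K} (h : eval t a = 0) : a ∣ (X 0 - C (t 0)) := by
  have hia : Irreducible (e1 K a) := by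
    exact (MulEquiv.irreducible_iff (e1 K).toMulEquiv).mpr ha
  have hdvd : (Polynomial.X - Polynomial.C (t 0)) ∣ e1 K a := by
    rw [Polynomial.dvd_iff_isRoot]; rw [eval_e1] at h; exact h
  obtain ⟨q, hq⟩ := hdvd
  have hq' : IsUnit q := by
    rcases hia.isUnit_or_isUnit hq with h' | h'
    · exact absurd h' (Polynomial.not_isUnit_X_sub_C _)
    · exact h'
  have : e1 K a ∣ (Polynomial.X - Polynomial.C (t 0)) := by
    obtain ⟨u, rfl⟩ := hq'
    exact ⟨(u⁻¹ : _), by rw [hq]; simp [mul_assoc]⟩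
  obtain ⟨q', hq'⟩ := this
  refine ⟨(e1 K).symm q', ?_⟩
  apply (e1 K).injective
  rw [map_mul, e1_X_sub_C, AlgEquiv.apply_symm_apply, ← hq']

noncomputable def e2 (K : Type*) [Field K] :
    MvPolynomial (Fin 2) K ≃ₐ[K] Polynomial (MvPolynomial (Fin 1) K) :=
  MvPolynomial.finSuccEquiv K 1

lemma eval_e2 (v : Fin 2 → K) (W : MvPolynomial (Fin 2) K) :
    eval v W = Polynomial.eval (v 0) ((e2 K W).map (eval (Fin.tail v))) := by
  have h := MvPolynomial.eval_eq_eval_mv_eval' (Fin.tail v) (v 0) W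
  rw [Fin.cons_self_tail] at h
  exact h

lemma X_sub_C_not_unit (c : K) : ¬ IsUnit (X 0 - C c : MvPolynomial (Fin 1) K) := by
  intro h
  have := h.map (e1 K)
  rw [e1_X_sub_C] at this
  exact Polynomial.not_isUnit_X_sub_C c this

lemma mapeval_ne_zero [IsAlgClosed K] {F : Polynomial (MvPolynomial (Fin 1) K)}
    (hF : Irreducible F) (hdeg : F.natDegree ≠ 0) (t : Fin 1 → K) :
    F.map (eval t) ≠ 0 := by
  intro h
  have hcoeff : ∀ k, eval t (F.coeff k) = 0 := by
    intro k
    have := congrArg (fun p => Polynomial.coeff p k) h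
    simpa [Polynomial.coeff_map] using this
  have hdvd : Polynomial.C (X 0 - C (t 0) : MvPolynomial (Fin 1) K) ∣ F := by
    rw [Polynomial.C_dvd_iff_dvd_coeff]
    exact fun k => univ_factor (hcoeff k)
  obtain ⟨q, hq⟩ := hdvd
  rcases hF.isUnit_or_isUnit hq with h' | h'
  · exact X_sub_C_not_unit (t 0) (Polynomial.isUnit_C.mp h')
  · obtain ⟨u, hu, rfl⟩ := Polynomial.isUnit_iff.mp h'
    apply hdeg
    rw [hq, ← Polynomial.C_mul]
    exact Polynomial.natDegree_C _

theorem dvd_of_infinite_common_zeros [IsAlgClosed K] {f g : MvPolynomial (Fin 2) K}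
    (hf : Irreducible f)
    (hinf : {v : Fin 2 → K | eval v f = 0 ∧ eval v g = 0}.Infinite) : f ∣ g := by
  rcases eq_or_ne g 0 with rfl | hg0
  · exact dvd_zero f
  set R1 := MvPolynomial (Fin 1) K
  set F := e2 K f with hFdef
  set G := e2 K g with hGdef
  have hF : Irreducible F := (MulEquiv.irreducible_iff (e2 K).toMulEquiv).mpr hf
  have hGne : G ≠ 0 := fun h => hg0 (by rwa [hGdef, EmbeddingLike.map_eq_zero_iff] at h)
  suffices hFG : F ∣ G by
    obtain ⟨q, hq⟩ := hFG
    refine ⟨(e2 K).symm q, ?_⟩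
    apply (e2 K).injective
    rw [map_mul, AlgEquiv.apply_symm_apply, ← hFdef, ← hq]
  have hevF : ∀ v : Fin 2 → K, eval v f =
      Polynomial.eval (v 0) (F.map (eval (Fin.tail v))) := fun v => eval_e2 v f
  have hevG : ∀ v : Fin 2 → K, eval v g =
      Polynomial.eval (v 0) (G.map (eval (Fin.tail v))) := fun v => eval_e2 v g
  by_cases hdeg : F.natDegree = 0
  · -- F is a constant polynomial C a
    have hFa : F = Polynomial.C (F.coeff 0) := Polynomial.eq_C_of_natDegree_eq_zero hdeg
    set a := F.coeff 0 with hadef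
    have ha : Irreducible a := by
      constructor
      · intro h; exact hF.not_isUnit (hFa ▸ Polynomial.isUnit_C.mpr h)
      · intro u v huv
        have : F = Polynomial.C u * Polynomial.C v := by rw [hFa, huv, Polynomial.C_mul]
        rcases hF.isUnit_or_isUnit this with h | h
        · exact Or.inl (Polynomial.isUnit_C.mp h)
        · exact Or.inr (Polynomial.isUnit_C.mp h)
    have haroots : {t : Fin 1 → K | eval t a = 0}.Finite := univ_root_finite ha.ne_zero
    -- pigeonhole: some fiber is infinite
    have hsub : {v : Fin 2 → K | eval v f = 0 ∧ eval v g = 0} ⊆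
        ⋃ t ∈ {t : Fin 1 → K | eval t a = 0},
          ({v : Fin 2 → K | eval v f = 0 ∧ eval v g = 0} ∩ {v | Fin.tail v = t}) := by
      intro v hv
      have h1 : eval (Fin.tail v) a = 0 := by
        have := hv.1
        rw [hevF v, hFa] at this
        simpa using this
      exact Set.mem_biUnion h1 ⟨hv, rfl⟩
    have : ∃ t ∈ {t : Fin 1 → K | eval t a = 0},
        ({v : Fin 2 → K | eval v f = 0 ∧ eval v g = 0} ∩ {v | Fin.tail v = t}).Infinite := by
      by_contra hcon
      push_neg at hcon
      exact hinf (Set.Finite.subset (Set.Finite.biUnion haroots hcon) hsub)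
    obtain ⟨t₀, ht₀, hfib⟩ := this
    -- heads of the fiber are infinitely many roots of G.map (eval t₀)
    have hGmap : G.map (eval t₀) = 0 := by
      by_contra hne
      have hroots : {y : K | (G.map (eval t₀)).IsRoot y}.Finite :=
        Polynomial.finite_setOf_isRoot hne
      apply hfib
      have : ({v : Fin 2 → K | eval v f = 0 ∧ eval v g = 0} ∩ {v | Fin.tail v = t₀}) ⊆
          (fun y => Fin.cons y t₀) '' {y : K | (G.map (eval t₀)).IsRoot y} := by
        rintro v ⟨⟨hvf, hvg⟩, hvt⟩
        refine ⟨v 0, ?_, ?_⟩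
        · have := hvg; rw [hevG v, hvt] at this; exact this
        · rw [← hvt]; exact Fin.cons_self_tail v
      exact Set.Finite.subset (hroots.image _) this
    have hGcoeff : ∀ k, eval t₀ (G.coeff k) = 0 := by
      intro k
      have := congrArg (fun p => Polynomial.coeff p k) hGmap
      simpa [Polynomial.coeff_map] using this
    have hdvdG : Polynomial.C (X 0 - C (t₀ 0) : R1) ∣ G := by
      rw [Polynomial.C_dvd_iff_dvd_coeff]
      exact fun k => univ_factor (hGcoeff k)
    have hadvd : a ∣ (X 0 - C (t₀ 0) : R1) := univ_irred_dvd ha ht₀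
    calc F = Polynomial.C a := hFa
    _ ∣ Polynomial.C (X 0 - C (t₀ 0) : R1) := map_dvd Polynomial.C hadvd
    _ ∣ G := hdvdG
  · -- positive degree case
    have hFprim : F.IsPrimitive := by
      intro r hr
      obtain ⟨q, hq⟩ := hr
      rcases hF.isUnit_or_isUnit hq with h | h
      · exact Polynomial.isUnit_C.mp h
      · obtain ⟨u, hu, rfl⟩ := Polynomial.isUnit_iff.mp h
        exact absurd (by rw [hq, ← Polynomial.C_mul]; exact Polynomial.natDegree_C _) hdeg
    letI : NormalizationMonoid R1 := UniqueFactorizationMonoid.normalizationMonoid.toNormalizationMonoid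
    letI : NormalizedGCDMonoid R1 := UniqueFactorizationMonoid.toNormalizedGCDMonoid R1
    set FF := FractionRing R1
    set φ := algebraMap R1 FF with hφdef
    have hφinj : Function.Injective φ := IsFractionRing.injective R1 FF
    have hFm : Irreducible (F.map φ) :=
      (hFprim.irreducible_iff_irreducible_map_fraction_map).mp hF
    by_cases hdvd : F.map φ ∣ G.map φ
    · -- conclude F ∣ G via primitive parts
      have hGdecomp := Polynomial.eq_C_content_mul_primPart G
      have hcne : φ G.content ≠ 0 := fun h =>
        hGne (Polynomial.content_eq_zero_iff.mp (hφinj (by rw [h, map_zero])))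
      have hCunit : IsUnit (Polynomial.C (φ G.content)) :=
        Polynomial.isUnit_C.mpr (isUnit_iff_ne_zero.mpr hcne)
      have hdvd2 : F.map φ ∣ (G.primPart).map φ := by
        have : G.map φ = Polynomial.C (φ G.content) * (G.primPart).map φ := by
          conv_lhs => rw [hGdecomp]
          rw [Polynomial.map_mul, Polynomial.map_C]
        rw [this] at hdvd
        exact (hCunit.dvd_mul_left).mp hdvd
      have : F ∣ G.primPart :=
        hFprim.dvd_of_fraction_map_dvd_fraction_map hdvd2
      exact this.trans (Polynomial.primPart_dvd G)
    · -- coprime case: derive finiteness, contradiction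
      exfalso
      have hco : IsCoprime (F.map φ) (G.map φ) := (hFm.coprime_iff_not_dvd).mpr hdvd
      obtain ⟨α, β, hab⟩ := hco
      obtain ⟨s, hs⟩ := IsLocalization.integerNormalization_map_to_map (nonZeroDivisors R1) α
      obtain ⟨t, ht⟩ := IsLocalization.integerNormalization_map_to_map (nonZeroDivisors R1) β
      set α' := IsLocalization.integerNormalization (nonZeroDivisors R1) α with hα'
      set β' := IsLocalization.integerNormalization (nonZeroDivisors R1) β with hβ'
      set r : R1 := (s : R1) * (t : R1) with hrdef
      have hr0 : r ≠ 0 := mul_ne_zero (nonZeroDivisors.ne_zero s.2) (nonZeroDivisors.ne_zero t.2)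
      have key : Polynomial.C (t : R1) * α' * F + Polynomial.C (s : R1) * β' * G
          = Polynomial.C r := by
        apply Polynomial.map_injective φ hφinj
        rw [← hφdef] at hs ht
        rw [Polynomial.map_add, Polynomial.map_mul, Polynomial.map_mul, Polynomial.map_mul,
          Polynomial.map_mul, Polynomial.map_C, Polynomial.map_C, Polynomial.map_C, hs, ht,
          Algebra.smul_def, Algebra.smul_def, Polynomial.algebraMap_apply,
          Polynomial.algebraMap_apply, ← hφdef, hrdef, map_mul, Polynomial.C_mul]
        linear_combination (Polynomial.C (φ (s : R1)) * Polynomial.C (φ (t : R1))) * hab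
      -- finiteness of the common zero set
      have hrroots : {t' : Fin 1 → K | eval t' r = 0}.Finite := univ_root_finite hr0
      have hsub : {v : Fin 2 → K | eval v f = 0 ∧ eval v g = 0} ⊆
          ⋃ t' ∈ {t' : Fin 1 → K | eval t' r = 0},
            (fun y => Fin.cons y t') '' {y : K | (F.map (eval t')).IsRoot y} := by
        rintro v ⟨hvf, hvg⟩
        set ψ : Polynomial R1 →+* K :=
          (Polynomial.evalRingHom (v 0)).comp (Polynomial.mapRingHom (eval (Fin.tail v))) with hψ
        have hψF : ψ F = 0 := by
          rw [hψ]
          simp only [RingHom.comp_apply, Polynomial.coe_mapRingHom, Polynomial.coe_evalRingHom]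
          exact (hevF v).symm.trans hvf
        have hψG : ψ G = 0 := by
          rw [hψ]
          simp only [RingHom.comp_apply, Polynomial.coe_mapRingHom, Polynomial.coe_evalRingHom]
          exact (hevG v).symm.trans hvg
        have hψC : ∀ b : R1, ψ (Polynomial.C b) = eval (Fin.tail v) b := by
          intro b
          rw [hψ]
          simp only [RingHom.comp_apply, Polynomial.coe_mapRingHom, Polynomial.coe_evalRingHom,
            Polynomial.map_C, Polynomial.eval_C]
        have hr : eval (Fin.tail v) r = 0 := by
          rw [← hψC r, ← key]
          simp only [map_add, map_mul, hψF, hψG, mul_zero, add_zero, zero_add]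
        refine Set.mem_biUnion hr ⟨v 0, ?_, Fin.cons_self_tail v⟩
        have := hvf; rw [hevF v] at this; exact this
      apply hinf
      refine Set.Finite.subset (Set.Finite.biUnion hrroots fun t' _ => ?_) hsub
      exact (Polynomial.finite_setOf_isRoot (mapeval_ne_zero hF hdeg t')).image _

theorem curve_infinite [IsAlgClosed K] [CharZero K] {f : MvPolynomial (Fin 2) K}
    (hf : Irreducible f) : {v : Fin 2 → K | eval v f = 0}.Infinite := by
  haveI : Infinite (Fin 1 → K) :=
    Infinite.of_injective (fun y : K => fun _ : Fin 1 => y) (fun a b h => congrFun h 0)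
  set F := e2 K f with hFdef
  have hF : Irreducible F := (MulEquiv.irreducible_iff (e2 K).toMulEquiv).mpr hf
  have hevF : ∀ v : Fin 2 → K, eval v f =
      Polynomial.eval (v 0) (F.map (eval (Fin.tail v))) := fun v => eval_e2 v f
  by_cases hdeg : F.natDegree = 0
  · have hFa : F = Polynomial.C (F.coeff 0) := Polynomial.eq_C_of_natDegree_eq_zero hdeg
    set a := F.coeff 0 with hadef
    have ha : Irreducible a := by
      constructor
      · intro h; exact hF.not_isUnit (hFa ▸ Polynomial.isUnit_C.mpr h)
      · intro u v huv
        have : F = Polynomial.C u * Polynomial.C v := by rw [hFa, huv, Polynomial.C_mul]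
        rcases hF.isUnit_or_isUnit this with h | h
        · exact Or.inl (Polynomial.isUnit_C.mp h)
        · exact Or.inr (Polynomial.isUnit_C.mp h)
    have hea : Irreducible (e1 K a) := (MulEquiv.irreducible_iff (e1 K).toMulEquiv).mpr ha
    have hdeg1 : (e1 K a).degree = 1 := IsAlgClosed.degree_eq_one_of_irreducible K hea
    obtain ⟨y₀, hy₀⟩ := IsAlgClosed.exists_root (k := K) (e1 K a) (by rw [hdeg1]; exact one_ne_zero)
    set t : Fin 1 → K := fun _ => y₀ with htdef
    have hta : eval t a = 0 := by rw [eval_e1]; exact hy₀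
    apply Set.infinite_of_injective_forall_mem (f := fun y : K => Fin.cons y t)
    · intro y y' h
      have := congrFun h 0
      simpa using this
    · intro y
      show eval (Fin.cons y t) f = 0
      rw [hevF, hFa]
      simp [Fin.tail_cons, hta]
  · have hF0 : F ≠ 0 := hF.ne_zero
    have hlead : F.leadingCoeff ≠ 0 := Polynomial.leadingCoeff_ne_zero.mpr hF0
    have hGoodinf : {t : Fin 1 → K | eval t F.leadingCoeff = 0}ᶜ.Infinite :=
      Set.Finite.infinite_compl (univ_root_finite hlead)
    haveI : Infinite ↥({t : Fin 1 → K | eval t F.leadingCoeff = 0}ᶜ) :=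
      Set.infinite_coe_iff.mpr hGoodinf
    have hch : ∀ tt : ↥({t : Fin 1 → K | eval t F.leadingCoeff = 0}ᶜ),
        ∃ y : K, eval (Fin.cons y tt.1) f = 0 := by
      rintro ⟨t, ht⟩
      have hc : (F.map (eval t)).coeff F.natDegree ≠ 0 := by
        rw [Polynomial.coeff_map]
        exact ht
      have hne : F.map (eval t) ≠ 0 := fun h => hc (by rw [h]; simp)
      have hnd : 0 < (F.map (eval t)).natDegree :=
        lt_of_lt_of_le (Nat.pos_of_ne_zero hdeg) (Polynomial.le_natDegree_of_ne_zero hc)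
      have hdne : (F.map (eval t)).degree ≠ 0 :=
        (Polynomial.natDegree_pos_iff_degree_pos.mp hnd).ne'
      obtain ⟨y, hy⟩ := IsAlgClosed.exists_root (F.map (eval t)) hdne
      refine ⟨y, ?_⟩
      rw [hevF]
      simpa [Fin.tail_cons] using hy
    choose yf hyf using hch
    apply Set.infinite_of_injective_forall_mem
      (f := fun tt : ↥({t : Fin 1 → K | eval t F.leadingCoeff = 0}ᶜ) => Fin.cons (yf tt) tt.1)
    · intro tt tt' h
      have : tt.1 = tt'.1 := by
        have := congrArg Fin.tail h
        simpa [Fin.tail_cons] using this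
      exact Subtype.ext this
    · exact hyf

noncomputable def nsqP (A : Fin 2 → K) : MvPolynomial (Fin 2) K :=
  (X 0 - C (A 0))^2 + (X 1 - C (A 1))^2

lemma eval_nsqP (A P : Fin 2 → K) : eval P (nsqP A) = nSq A P := by
  simp [nsqP, nSq]

noncomputable def Gsub (A : Fin 2 → K) (g : MvPolynomial (Fin 2) K) :
    Polynomial (MvPolynomial (Fin 2) K) :=
  MvPolynomial.aeval
    (fun i => Polynomial.C (X i) + Polynomial.X * Polynomial.C (X i - C (A i))) g

lemma eval_Gsub (A : Fin 2 → K) (g : MvPolynomial (Fin 2) K) (P : Fin 2 → K) (τ : K) :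
    Polynomial.eval τ ((Gsub A g).map (eval P)) =
      eval (fun i => P i + τ * (P i - A i)) g := by
  induction g using MvPolynomial.induction_on with
  | C a => simp [Gsub, Polynomial.algebraMap_apply, MvPolynomial.algebraMap_eq]
  | add p q ihp ihq =>
      simp only [Gsub, map_add, Polynomial.map_add, Polynomial.eval_add] at *
      rw [ihp, ihq]
  | mul_X p i ih =>
      simp only [Gsub, map_mul, MvPolynomial.aeval_X, Polynomial.map_mul,
        Polynomial.eval_mul] at *
      rw [ih]
      simp [map_sub]

noncomputable def Hsym (A : Fin 2 → K) (d : K) (W : Polynomial (MvPolynomial (Fin 2) K)) :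
    MvPolynomial (Fin 2) K :=
  ∑ j ∈ Finset.range (W.natDegree + 1),
    C ((1 + (-1)^j) * d^j) * W.coeff j * (nsqP A)^(W.natDegree - j/2)

lemma eval_Hsym (A : Fin 2 → K) (d : K) (W : Polynomial (MvPolynomial (Fin 2) K))
    (P : Fin 2 → K) (τ s : K) (hs : nSq A P = s) (hτ : τ^2 * s = d^2) :
    eval P (Hsym A d W) = s ^ W.natDegree *
      (Polynomial.eval τ (W.map (eval P)) + Polynomial.eval (-τ) (W.map (eval P))) := by
  have hmaplt : (W.map (eval P)).natDegree < W.natDegree + 1 :=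
    lt_of_le_of_lt Polynomial.natDegree_map_le (Nat.lt_succ_self _)
  rw [Polynomial.eval_eq_sum_range' hmaplt, Polynomial.eval_eq_sum_range' hmaplt]
  rw [Hsym, map_sum, ← Finset.sum_add_distrib, Finset.mul_sum]
  apply Finset.sum_congr rfl
  intro j hj
  have hjN : j ≤ W.natDegree := Nat.lt_succ_iff.mp (Finset.mem_range.mp hj)
  simp only [map_mul, MvPolynomial.eval_C, map_pow, eval_nsqP, hs, Polynomial.coeff_map]
  rcases Nat.even_or_odd j with he | ho
  · obtain ⟨m, hm⟩ := he
    have hjm : j = 2*m := by omega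
    have hj2 : j/2 = m := by omega
    have hmN : m ≤ W.natDegree := by omega
    have hsN : s^W.natDegree = s^m * s^(W.natDegree - m) := by
      rw [← pow_add]; congr 1; omega
    have hdj : d^j = (τ^2*s)^m := by rw [hjm, pow_mul, hτ]
    have hτj : (-τ)^j = τ^j := (by simpa using Even.neg_pow ⟨m, hm⟩ τ)
    have hone : ((-1 : K))^j = 1 := Even.neg_one_pow ⟨m, hm⟩
    rw [hj2, hsN, hdj, hτj, hone, hjm, pow_mul, mul_pow]
    ring
  · have hτj : (-τ)^j = -(τ^j) := Odd.neg_pow ho τ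
    have hone : ((-1 : K))^j = -1 := Odd.neg_one_pow ho
    rw [hτj, hone]
    ring

def Qpt {K : Type*} [Field K] (A P : Fin 2 → K) (τ : K) : Fin 2 → K :=
  fun i => P i + τ * (P i - A i)

lemma Hpair_zero_iff [CharZero K] (A : Fin 2 → K) (d : K) (g : MvPolynomial (Fin 2) K)
    (P : Fin 2 → K) (τ s : K) (hs : nSq A P = s) (hsne : s ≠ 0) (hτ : τ^2 * s = d^2) :
    (eval P (Hsym A d (Gsub A g)) = 0 ∧
      eval P (Hsym A d (Gsub A g * (Gsub A g).comp (-Polynomial.X))) = 0) ↔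
    (eval (Qpt A P τ) g = 0 ∧ eval (Qpt A P (-τ)) g = 0) := by
  set u := (Gsub A g).map (eval P) with hu
  set x := eval (Qpt A P τ) g with hx
  set y := eval (Qpt A P (-τ)) g with hy
  have hux : Polynomial.eval τ u = x := eval_Gsub A g P τ
  have huy : Polynomial.eval (-τ) u = y := eval_Gsub A g P (-τ)
  have h1 : eval P (Hsym A d (Gsub A g)) = s ^ (Gsub A g).natDegree * (x + y) := by
    rw [eval_Hsym A d _ P τ s hs hτ, ← hu, hux, huy]
  set W2 := Gsub A g * (Gsub A g).comp (-Polynomial.X) with hW2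
  have hW2map : W2.map (eval P) = u * u.comp (-Polynomial.X) := by
    rw [hW2, Polynomial.map_mul, Polynomial.map_comp]
    simp
    rw [hu]
  have hevτ : Polynomial.eval τ (W2.map (eval P)) = x * y := by
    rw [hW2map, Polynomial.eval_mul, Polynomial.eval_comp]
    simp [hux, huy]
  have hevnτ : Polynomial.eval (-τ) (W2.map (eval P)) = y * x := by
    rw [hW2map, Polynomial.eval_mul, Polynomial.eval_comp]
    simp [hux, huy]
  have h2 : eval P (Hsym A d W2) = s ^ W2.natDegree * (x * y + y * x) := by
    rw [eval_Hsym A d _ P τ s hs hτ, hevτ, hevnτ]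
  rw [h1, h2]
  have hp1 : s ^ (Gsub A g).natDegree ≠ 0 := pow_ne_zero _ hsne
  have hp2 : s ^ W2.natDegree ≠ 0 := pow_ne_zero _ hsne
  constructor
  · rintro ⟨e1', e2'⟩
    have hxy : x + y = 0 := by
      rcases mul_eq_zero.mp e1' with h | h
      · exact absurd h hp1
      · exact h
    have hxy2 : x * y = 0 := by
      rcases mul_eq_zero.mp e2' with h | h
      · exact absurd h hp2
      · have : (2 : K) * (x * y) = 0 := by linear_combination h
        exact (mul_eq_zero.mp this).resolve_left two_ne_zero
    rcases mul_eq_zero.mp hxy2 with h | h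
    · exact ⟨h, by linear_combination hxy - h⟩
    · exact ⟨by linear_combination hxy - h, h⟩
  · rintro ⟨rfl0, rfl1⟩
    rw [rfl0, rfl1]
    constructor <;> ring

lemma mem_Inc_Qpt (Cset : Set (Fin 2 → K)) (A : Fin 2 → K) (d : K)
    (P : Fin 2 → K) (hP : P ∈ Cset) (τ s : K) (hs : nSq A P = s) (hsne : s ≠ 0)
    (hτ : τ^2 * s = d^2) : ((Qpt A P τ), P, s⁻¹) ∈ Inc Cset A d := by
  refine ⟨hP, ?_, ?_, ?_⟩
  · show (Qpt A P τ 0 - P 0)^2 + (Qpt A P τ 1 - P 1)^2 = d^2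
    simp only [Qpt]
    rw [← hτ, ← hs]
    simp only [nSq]
    ring
  · show (P 1 - A 1) * (Qpt A P τ 0 - P 0) - (P 0 - A 0) * (Qpt A P τ 1 - P 1) = 0
    simp only [Qpt]
    ring
  · show s⁻¹ * nSq A P = 1
    rw [hs]
    exact inv_mul_cancel₀ hsne

lemma Inc_fiber_sub (Cset : Set (Fin 2 → K)) (A : Fin 2 → K) (d : K)
    (P : Fin 2 → K) (τ s : K) (hs : nSq A P = s) (hsne : s ≠ 0) (hτ : τ^2 * s = d^2)
    {q : (Fin 2 → K) × (Fin 2 → K) × K} (hq : q ∈ Inc Cset A d) (hqP : q.2.1 = P) :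
    q = ((Qpt A P τ), P, s⁻¹) ∨ q = ((Qpt A P (-τ)), P, s⁻¹) := by
  obtain ⟨hmem, hdist, hcross, hw⟩ := hq
  rw [hqP] at hdist hcross hw
  set a := P 0 - A 0 with ha
  set b := P 1 - A 1 with hb
  have hab : a^2 + b^2 = s := by rw [← hs]; rfl
  have hwv : q.2.2 = s⁻¹ := by
    have : q.2.2 * s = 1 := by rw [← hs]; exact hw
    field_simp at this ⊢
    rw [this]
  set u := q.1 0 - P 0 with hu
  set v := q.1 1 - P 1 with hv
  have hcross' : b * u - a * v = 0 := hcross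
  have hdist' : u^2 + v^2 = d^2 := hdist
  -- find t with u = t*a, v = t*b
  obtain ⟨t, htu, htv⟩ : ∃ t : K, u = t * a ∧ v = t * b := by
    by_cases hA : a = 0
    · have hbne : b ≠ 0 := by
        intro hB
        apply hsne
        rw [← hab, hA, hB]; ring
      refine ⟨v / b, ?_, (div_mul_cancel₀ v hbne).symm⟩
      have : u = 0 := by
        have : b * u = 0 := by rw [← hcross', hA]; ring
        rcases mul_eq_zero.mp this with h | h
        · exact absurd h hbne
        · exact h
      rw [this, hA]; ring
    · have hveq : a * v = b * u := by linear_combination -hcross'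
      refine ⟨u / a, (div_mul_cancel₀ u hA).symm, ?_⟩
      rw [div_mul_eq_mul_div, eq_div_iff hA]
      linear_combination hveq
  have ht2 : t^2 * s = d^2 := by
    rw [← hab, ← hdist', htu, htv]; ring
  have : t = τ ∨ t = -τ := by
    have h2 : t^2 = τ^2 := by
      have hss : t^2 * s = τ^2 * s := by rw [ht2, hτ]
      exact mul_right_cancel₀ hsne hss
    have : (t - τ) * (t + τ) = 0 := by linear_combination h2
    rcases mul_eq_zero.mp this with h | h
    · left; linear_combination h
    · right; linear_combination h
  have hq1 : ∀ tv : K, u = tv * a → v = tv * b → q.1 = Qpt A P tv := by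
    intro tv h1 h2
    funext i
    fin_cases i
    · show q.1 0 = P 0 + tv * (P 0 - A 0)
      have : q.1 0 = P 0 + u := by rw [hu]; ring
      rw [this, h1, ha]
    · show q.1 1 = P 1 + tv * (P 1 - A 1)
      have : q.1 1 = P 1 + v := by rw [hv]; ring
      rw [this, h2, hb]
  rcases this with rfl | rfl
  · left
    have : q = (q.1, q.2.1, q.2.2) := rfl
    rw [this, hq1 t htu htv, hqP, hwv]
  · right
    have h1 : u = -τ * a := by rw [htu]
    have h2 : v = -τ * b := by rw [htv]
    have : q = (q.1, q.2.1, q.2.2) := rfl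
    rw [this, hq1 (-τ) h1 h2, hqP, hwv]

end

end AuxConchoid

theorem stmt19 {K : Type*} [Field K] [IsAlgClosed K] [CharZero K]
    (f : MvPolynomial (Fin 2) K) (hf : Irreducible f)
    (A : Fin 2 → K) (d : K) (hd : d ≠ 0)
    (h0 : (nonIso (curveOf f) A).Nonempty)
    (hC : curveOf f ≠ circleAt A d)
    (M M' : Set (Fin 2 → K))
    (hM : IsCompOf M (conchoid (curveOf f) A d))
    (hM' : IsCompOf M' (conchoid (curveOf f) A d))
    (hne : M ≠ M')
    (hsplit : conchoid (curveOf f) A d = M ∪ M') :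
    curveOf f ⊆ closure ((fun q => q.2.1) '' {q ∈ Inc (curveOf f) A d | q.1 ∈ M}) ∧
    ∃ Ω : Set (Fin 2 → K), Ω.Nonempty ∧ Ω ⊆ curveOf f ∧ curveOf f ⊆ closure Ω ∧
      ∀ P ∈ Ω, ({q ∈ Inc (curveOf f) A d | q.1 ∈ M ∧ q.2.1 = P}).ncard = 1 := by
  classical
  obtain ⟨P₀, hP₀⟩ := h0
  have hP₀C : P₀ ∈ curveOf f := hP₀.1
  have hP₀s : nSq A P₀ ≠ 0 := hP₀.2
  -- points separating the two components
  have hz' : ∃ z', z' ∈ M' ∧ z' ∉ M := by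
    by_contra hcon
    push_neg at hcon
    exact hne (hM'.2.2.2 M hM.1 hM.2.2.1 fun x hx => hcon x hx)
  have hz : ∃ z, z ∈ M ∧ z ∉ M' := by
    by_contra hcon
    push_neg at hcon
    exact hne (hM.2.2.2 M' hM'.1 hM'.2.2.1 fun x hx => hcon x hx).symm
  obtain ⟨z', hz'M', hz'nM⟩ := hz'
  obtain ⟨z, hzM, hznM'⟩ := hz
  obtain ⟨g₁, hg₁van, hg₁ne⟩ := exists_poly_of_not_mem_closed hM.2.1 hz'nM
  obtain ⟨g₂, hg₂van, hg₂ne⟩ := exists_poly_of_not_mem_closed hM'.2.1 hznM'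
  set H1 := Hsym A d (Gsub A g₁) with hH1def
  set H2 := Hsym A d (Gsub A g₁ * (Gsub A g₁).comp (-Polynomial.X)) with hH2def
  set H1' := Hsym A d (Gsub A g₂) with hH1'def
  set H2' := Hsym A d (Gsub A g₂ * (Gsub A g₂).comp (-Polynomial.X)) with hH2'def
  -- square roots exist
  have hsqrt : ∀ s : K, s ≠ 0 → ∃ τ : K, τ ^ 2 * s = d ^ 2 := by
    intro s hs
    obtain ⟨τ, hτ⟩ := IsAlgClosed.exists_pow_nat_eq (d ^ 2 / s) (n := 2) (by norm_num)
    exact ⟨τ, by rw [hτ]; field_simp⟩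
  -- basic incidence facts
  have hIncP : ∀ q ∈ Inc (curveOf f) A d, q.2.1 ∈ curveOf f ∧ nSq A q.2.1 ≠ 0 := by
    rintro q ⟨h1, _, _, h4⟩
    refine ⟨h1, fun h => ?_⟩
    rw [h, mul_zero] at h4
    exact zero_ne_one h4
  have hQmem : ∀ q ∈ Inc (curveOf f) A d, q.1 ∈ M ∪ M' := by
    intro q hq
    have hc : q.1 ∈ conchoid (curveOf f) A d := by
      simp only [conchoid, zarClosure, Set.mem_setOf_eq]
      intro p hp
      exact hp q.1 ⟨q, hq, rfl⟩
    rwa [hsplit] at hc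
  have hdvd_eval : ∀ p q : MvPolynomial (Fin 2) K, p ∣ q →
      ∀ v : Fin 2 → K, eval v p = 0 → eval v q = 0 := by
    rintro p q ⟨c, rfl⟩ v hv
    rw [map_mul, hv, zero_mul]
  -- the key non-divisibility facts
  have hkey : ∀ g : MvPolynomial (Fin 2) K, (∀ y ∈ M ∪ M', eval y g = 0) → False → True :=
    fun _ _ _ => trivial
  have hkey1 : ∀ (g : MvPolynomial (Fin 2) K) (z₀ : Fin 2 → K),
      z₀ ∈ M ∪ M' → eval z₀ g ≠ 0 →
      ¬(f ∣ Hsym A d (Gsub A g) ∧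
        f ∣ Hsym A d (Gsub A g * (Gsub A g).comp (-Polynomial.X))) := by
    rintro g z₀ hz₀ hz₀ne ⟨hd1, hd2⟩
    have hvan : ∀ Q ∈ (fun q : (Fin 2 → K) × (Fin 2 → K) × K => q.1) ''
        Inc (curveOf f) A d, eval Q g = 0 := by
      rintro Q ⟨q, hq, rfl⟩
      obtain ⟨hqC, hqs⟩ := hIncP q hq
      obtain ⟨τ, hτ⟩ := hsqrt (nSq A q.2.1) hqs
      have hPf : eval q.2.1 f = 0 := hqC
      have hH1z : eval q.2.1 (Hsym A d (Gsub A g)) = 0 := hdvd_eval _ _ hd1 _ hPf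
      have hH2z : eval q.2.1 (Hsym A d (Gsub A g * (Gsub A g).comp (-Polynomial.X))) = 0 :=
        hdvd_eval _ _ hd2 _ hPf
      have hboth := (Hpair_zero_iff A d g q.2.1 τ (nSq A q.2.1) rfl hqs hτ).mp ⟨hH1z, hH2z⟩
      show eval q.1 g = 0
      rcases Inc_fiber_sub (curveOf f) A d q.2.1 τ (nSq A q.2.1) rfl hqs hτ hq rfl with h | h
      · rw [show q.1 = Qpt A q.2.1 τ from congrArg Prod.fst h]
        exact hboth.1
      · rw [show q.1 = Qpt A q.2.1 (-τ) from congrArg Prod.fst h]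
        exact hboth.2
    have hz₀c : eval z₀ g = 0 := by
      have hcz : z₀ ∈ conchoid (curveOf f) A d := by rw [hsplit]; exact hz₀
      have : ∀ p : MvPolynomial (Fin 2) K,
          (∀ s ∈ (fun q : (Fin 2 → K) × (Fin 2 → K) × K => q.1) '' Inc (curveOf f) A d,
            eval s p = 0) → eval z₀ p = 0 := hcz
      exact this g hvan
    exact hz₀ne hz₀c
  have hkeyM : ¬(f ∣ H1 ∧ f ∣ H2) := hkey1 g₁ z' (Or.inr hz'M') hg₁ne
  have hkeyM' : ¬(f ∣ H1' ∧ f ∣ H2') := hkey1 g₂ z (Or.inl hzM) hg₂ne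
  -- finiteness of the bad loci
  have hfin_of_ndvd : ∀ g : MvPolynomial (Fin 2) K, ¬ f ∣ g →
      {v : Fin 2 → K | eval v f = 0 ∧ eval v g = 0}.Finite := by
    intro g hg
    by_contra hc
    exact hg (dvd_of_infinite_common_zeros hf hc)
  have hT : {P : Fin 2 → K | eval P f = 0 ∧ eval P H1 = 0 ∧ eval P H2 = 0}.Finite := by
    rcases not_and_or.mp hkeyM with hnd | hnd
    · exact (hfin_of_ndvd _ hnd).subset fun P hP => ⟨hP.1, hP.2.1⟩
    · exact (hfin_of_ndvd _ hnd).subset fun P hP => ⟨hP.1, hP.2.2⟩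
  have hT' : {P : Fin 2 → K | eval P f = 0 ∧ eval P H1' = 0 ∧ eval P H2' = 0}.Finite := by
    rcases not_and_or.mp hkeyM' with hnd | hnd
    · exact (hfin_of_ndvd _ hnd).subset fun P hP => ⟨hP.1, hP.2.1⟩
    · exact (hfin_of_ndvd _ hnd).subset fun P hP => ⟨hP.1, hP.2.2⟩
  have hN : {P : Fin 2 → K | eval P f = 0 ∧ eval P (nsqP A) = 0}.Finite := by
    apply hfin_of_ndvd
    intro hdvd
    apply hP₀s
    rw [← eval_nsqP A P₀]
    exact hdvd_eval _ _ hdvd _ hP₀C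
  set Bad : Set (Fin 2 → K) :=
    {P : Fin 2 → K | eval P f = 0 ∧ eval P H1 = 0 ∧ eval P H2 = 0} ∪
    ({P : Fin 2 → K | eval P f = 0 ∧ eval P H1' = 0 ∧ eval P H2' = 0} ∪
     {P : Fin 2 → K | eval P f = 0 ∧ eval P (nsqP A) = 0}) with hBaddef
  have hBadfin : Bad.Finite := (hT.union (hT'.union hN))
  set Ω : Set (Fin 2 → K) := curveOf f \ Bad with hΩdef
  have hcurveinf : (curveOf f).Infinite := curve_infinite hf
  have hΩinf : Ω.Infinite := hcurveinf.diff hBadfin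
  -- main per-point analysis
  have hmain : ∀ P ∈ Ω, ∃ q : (Fin 2 → K) × (Fin 2 → K) × K,
      (q ∈ Inc (curveOf f) A d ∧ q.1 ∈ M ∧ q.2.1 = P) ∧
      (∀ q', q' ∈ Inc (curveOf f) A d → q'.1 ∈ M → q'.2.1 = P → q' = q) := by
    rintro P ⟨hPC, hPB⟩
    have hPf : eval P f = 0 := hPC
    have hs : nSq A P ≠ 0 := by
      intro h
      exact hPB (Or.inr (Or.inr ⟨hPf, by rw [eval_nsqP]; exact h⟩))
    obtain ⟨τ, hτ⟩ := hsqrt (nSq A P) hs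
    have hτ' : (-τ) ^ 2 * nSq A P = d ^ 2 := by rw [neg_sq]; exact hτ
    set qp : (Fin 2 → K) × (Fin 2 → K) × K := (Qpt A P τ, P, (nSq A P)⁻¹) with hqpdef
    set qm : (Fin 2 → K) × (Fin 2 → K) × K := (Qpt A P (-τ), P, (nSq A P)⁻¹) with hqmdef
    have hqpI : qp ∈ Inc (curveOf f) A d := mem_Inc_Qpt _ A d P hPC τ (nSq A P) rfl hs hτ
    have hqmI : qm ∈ Inc (curveOf f) A d := mem_Inc_Qpt _ A d P hPC (-τ) (nSq A P) rfl hs hτ'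
    have hQp := hQmem qp hqpI
    have hQm := hQmem qm hqmI
    have hnotM : ¬(qp.1 ∈ M ∧ qm.1 ∈ M) := by
      rintro ⟨h1, h2⟩
      apply hPB
      refine Or.inl ⟨hPf, ?_⟩
      exact (Hpair_zero_iff A d g₁ P τ (nSq A P) rfl hs hτ).mpr ⟨hg₁van _ h1, hg₁van _ h2⟩
    have hnotM' : ¬(qp.1 ∈ M' ∧ qm.1 ∈ M') := by
      rintro ⟨h1, h2⟩
      apply hPB
      refine Or.inr (Or.inl ⟨hPf, ?_⟩)
      exact (Hpair_zero_iff A d g₂ P τ (nSq A P) rfl hs hτ).mpr ⟨hg₂van _ h1, hg₂van _ h2⟩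
    rcases hQp with hpM | hpM'
    · refine ⟨qp, ⟨hqpI, hpM, rfl⟩, ?_⟩
      intro q' hq'I hq'M hq'P
      rcases Inc_fiber_sub (curveOf f) A d P τ (nSq A P) rfl hs hτ hq'I hq'P with h | h
      · exact h
      · have hq'qm : q' = qm := h
        exact absurd ⟨hpM, hq'qm ▸ hq'M⟩ hnotM
    · have hqmM : qm.1 ∈ M := by
        rcases hQm with h | h
        · exact h
        · exact absurd ⟨hpM', h⟩ hnotM'
      refine ⟨qm, ⟨hqmI, hqmM, rfl⟩, ?_⟩
      intro q' hq'I hq'M hq'P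
      rcases Inc_fiber_sub (curveOf f) A d P τ (nSq A P) rfl hs hτ hq'I hq'P with h | h
      · have hq'qp : q' = qp := h
        exact absurd ⟨hq'qp ▸ hq'M, hqmM⟩ hnotM
      · exact h
  -- conclusions
  have hdense : ∀ x ∈ curveOf f, ∀ p : MvPolynomial (Fin 2) K,
      (∀ v ∈ Ω, eval v p = 0) → eval x p = 0 := by
    intro x hx p hp
    have hsub : Ω ⊆ {v : Fin 2 → K | eval v f = 0 ∧ eval v p = 0} :=
      fun v hv => ⟨hv.1, hp v hv⟩
    have hinf2 : {v : Fin 2 → K | eval v f = 0 ∧ eval v p = 0}.Infinite := hΩinf.mono hsub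
    exact hdvd_eval _ _ (dvd_of_infinite_common_zeros hf hinf2) x hx
  constructor
  · intro x hx
    rw [mem_closure_iff_zar]
    intro p hp
    apply hdense x hx p
    intro v hv
    obtain ⟨q, ⟨hqI, hqM, hqP⟩, -⟩ := hmain v hv
    exact hp v ⟨q, ⟨hqI, hqM⟩, hqP⟩
  · refine ⟨Ω, hΩinf.nonempty, Set.diff_subset, ?_, ?_⟩
    · intro x hx
      rw [mem_closure_iff_zar]
      intro p hp
      exact hdense x hx p hp
    · intro P hP
      obtain ⟨q, ⟨hqI, hqM, hqP⟩, huniq⟩ := hmain P hP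
      have hset : {q' : (Fin 2 → K) × (Fin 2 → K) × K |
          q' ∈ Inc (curveOf f) A d ∧ q'.1 ∈ M ∧ q'.2.1 = P} = {q} := by
        ext q'
        constructor
        · rintro ⟨h1, h2, h3⟩
          exact huniq q' h1 h2 h3
        · rintro rfl
          exact ⟨hqI, hqM, hqP⟩
      rw [show {q' ∈ Inc (curveOf f) A d | q'.1 ∈ M ∧ q'.2.1 = P} = ({q} : Set _) from hset]
      exact Set.ncard_singleton q
end
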